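/- arXiv:2312.12215 — 10 statements merged into one kernel-verified Lean document; each statement's English description precedes it below -/
import Mathlib

section
/- Let F be an arbitrary field and G a finite group. Then the F-vector space of inner derivations of the group algebra FG has dimension |G| − r over F, where r is the number of conjugacy classes of G. -/
open MonoidAlgebra

/-- The `F`-linear map sending `β ∈ FG` to the inner derivation
`d_β : α ↦ α * β - β * α` of the group algebra `FG`. -/
noncomputable def innerDerivMap (F G : Type*) [Field F] [Group G] :
    MonoidAlgebra F G →ₗ[F] Module.End F (MonoidAlgebra F G) where
  toFun β :=
    { toFun := fun α => α * β - β * α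
      map_add' := by intro x y; noncomm_ring
      map_smul' := by intro c x; simp [smul_mul_assoc, mul_smul_comm, smul_sub] }
  map_add' := by
    intro β γ; refine LinearMap.ext fun α => ?_
    simp only [LinearMap.coe_mk, AddHom.coe_mk, LinearMap.add_apply]
    noncomm_ring
  map_smul' := by
    intro c β; refine LinearMap.ext fun α => ?_
    simp [smul_mul_assoc, mul_smul_comm, smul_sub]

lemma mem_ker_innerDerivMap_iff (F G : Type*) [Field F] [Group G]
    (β : MonoidAlgebra F G) :
    β ∈ LinearMap.ker (innerDerivMap F G) ↔ ∀ g x : G, β.coeff (g * x) = β.coeff (x * g) := by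
  constructor
  · intro hβ g x
    have h : (MonoidAlgebra.single g (1:F)) * β - β * (MonoidAlgebra.single g (1:F)) = 0 :=
      LinearMap.congr_fun (LinearMap.mem_ker.mp hβ) (MonoidAlgebra.single g (1:F))
    have heq := sub_eq_zero.mp h
    have h2 : ((MonoidAlgebra.single g (1:F)) * β).coeff (g * x * g)
        = (β * MonoidAlgebra.single g (1:F)).coeff (g * x * g) := by rw [heq]
    simp only [MonoidAlgebra.single_mul_apply, MonoidAlgebra.mul_single_apply,
      one_mul, mul_one] at h2
    have e1 : g⁻¹ * (g * x * g) = x * g := by group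
    have e2 : g * x * g * g⁻¹ = g * x := by group
    rw [e1, e2] at h2
    exact h2.symm
  · intro h
    rw [LinearMap.mem_ker]
    refine LinearMap.ext fun α => ?_
    show α * β - β * α = 0
    rw [sub_eq_zero]
    -- α commutes with β: reduce to singles via linearity
    have key : ∀ g r, (MonoidAlgebra.single g r : MonoidAlgebra F G) * β
        = β * MonoidAlgebra.single g r := by
      intro g r
      ext y
      simp only [MonoidAlgebra.single_mul_apply, MonoidAlgebra.mul_single_apply]
      rw [mul_comm]
      congr 1
      have := h g⁻¹ y
      rw [this]
    let L : MonoidAlgebra F G →ₗ[F] MonoidAlgebra F G :=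
      { toFun := fun α => α * β
        map_add' := fun x y => add_mul x y β
        map_smul' := fun c x => smul_mul_assoc c x β }
    let R : MonoidAlgebra F G →ₗ[F] MonoidAlgebra F G :=
      { toFun := fun α => β * α
        map_add' := fun x y => mul_add β x y
        map_smul' := fun c x => mul_smul_comm c β x }
    have : L = R := MonoidAlgebra.lhom_ext' fun g => LinearMap.ext fun r => by
      simpa [L, R] using key g r
    exact LinearMap.congr_fun this α

lemma constant_on_conj (F G : Type*) [Field F] [Group G]
    (β : MonoidAlgebra F G) (hβ : ∀ g x : G, β.coeff (g * x) = β.coeff (x * g))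
    {x y : G} (hxy : IsConj x y) : β.coeff x = β.coeff y := by
  obtain ⟨c, hc⟩ := isConj_iff.mp hxy
  have := hβ c (x * c⁻¹)
  rw [mul_assoc] at this
  simp only [inv_mul_cancel, mul_one] at this
  rw [← mul_assoc] at this
  rw [hc] at this
  exact this.symm

noncomputable instance (G : Type*) [Group G] [Fintype G] : Fintype (ConjClasses G) := by
  classical exact Fintype.ofFinite _

/-- The kernel of the inner derivation map is linearly equivalent to functions
on conjugacy classes. -/
noncomputable def kerEquiv (F G : Type*) [Field F] [Group G] [Fintype G] :
    LinearMap.ker (innerDerivMap F G) ≃ₗ[F] (ConjClasses G → F) := by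
  let E : LinearMap.ker (innerDerivMap F G) →ₗ[F] (ConjClasses G → F) :=
    { toFun := fun β c => (β : MonoidAlgebra F G).coeff (Quotient.out c)
      map_add' := fun x y => by ext c; exact Finsupp.add_apply _ _ _
      map_smul' := fun r x => by ext c; exact Finsupp.smul_apply _ _ _ }
  refine LinearEquiv.ofBijective E ⟨?_, ?_⟩
  · intro β γ hβγ
    ext x
    have h1 := (mem_ker_innerDerivMap_iff F G β).mp β.2
    have h2 := (mem_ker_innerDerivMap_iff F G γ).mp γ.2
    have hout : IsConj x (Quotient.out (ConjClasses.mk x)) := by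
      rw [← ConjClasses.mk_eq_mk_iff_isConj]
      exact (Quotient.out_eq _).symm
    have := congr_fun hβγ (ConjClasses.mk x)
    simp only [E, LinearMap.coe_mk, AddHom.coe_mk] at this
    rw [constant_on_conj F G β h1 hout, constant_on_conj F G γ h2 hout]
    exact this
  · intro f
    classical
    set β : MonoidAlgebra F G :=
      .ofCoeff ((Finsupp.linearEquivFunOnFinite F F G).symm (fun x => f (ConjClasses.mk x))) with hβ
    have happ : ∀ x, β.coeff x = f (ConjClasses.mk x) := fun x => rfl
    have hker : β ∈ LinearMap.ker (innerDerivMap F G) := by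
      rw [mem_ker_innerDerivMap_iff]
      intro g x
      rw [happ, happ]
      congr 1
      rw [ConjClasses.mk_eq_mk_iff_isConj]
      exact isConj_iff.mpr ⟨g⁻¹, by group⟩
    refine ⟨⟨β, hker⟩, ?_⟩
    ext c
    simp only [E, LinearMap.coe_mk, AddHom.coe_mk]
    rw [happ]
    congr 1
    exact Quotient.out_eq c

/-- The space of inner derivations of `FG` has dimension `|G| - r` where `r` is
the number of conjugacy classes of `G`. -/
theorem finrank_innerDerivations_eq (F G : Type*) [Field F] [Group G] [Fintype G] :
    Module.finrank F (LinearMap.range (innerDerivMap F G)) =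
      Fintype.card G - Nat.card (ConjClasses G) := by
  classical
  have hdom : Module.finrank F (MonoidAlgebra F G) = Fintype.card G := by
    rw [show Module.finrank F (MonoidAlgebra F G) = Module.finrank F (G → F) from
      ((MonoidAlgebra.coeffLinearEquiv F).trans (Finsupp.linearEquivFunOnFinite F F G)).finrank_eq,
      Module.finrank_fintype_fun_eq_card]
  have hker : Module.finrank F (LinearMap.ker (innerDerivMap F G))
      = Nat.card (ConjClasses G) := by
    rw [(kerEquiv F G).finrank_eq, Module.finrank_fintype_fun_eq_card,
      Nat.card_eq_fintype_card]
  haveI : FiniteDimensional F (MonoidAlgebra F G) :=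
    Module.Finite.equiv ((MonoidAlgebra.coeffLinearEquiv F).trans (Finsupp.linearEquivFunOnFinite F F G)).symm
  have hdim := LinearMap.finrank_range_add_finrank_ker (innerDerivMap F G)
  rw [hdom, hker] at hdim
  omega
end

section
/- Let n ≥ 3 and let F be a field of characteristic 0 or of odd prime characteristic p. In the group algebra F D_{2n} of the dihedral group D_{2n} = ⟨a, b | aⁿ = b² = (ab)² = 1⟩, the set {aⁱ − a⁻ⁱ, (aⁱ − a⁻ⁱ)b : i = 1, 2, ..., ⌊(n−1)/2⌋} is an F-basis of the anti-centralizer C̄(b) = {α ∈ F D_{2n} : αb = −bα}. -/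
open MonoidAlgebra

/-- The anti-centralizer `C̄(β) = {α | α β = - β α}` as an `F`-subspace of the
group algebra `FG`. -/
def antiCentralizer (F G : Type*) [Field F] [Group G] (β : MonoidAlgebra F G) :
    Submodule F (MonoidAlgebra F G) where
  carrier := {α | α * β = -(β * α)}
  add_mem' := by
    intro x y hx hy
    simp only [Set.mem_setOf_eq] at *
    rw [add_mul, mul_add, hx, hy, neg_add]
  zero_mem' := by simp
  smul_mem' := by
    intro c x hx
    simp only [Set.mem_setOf_eq] at *
    rw [smul_mul_assoc, hx, mul_smul_comm, smul_neg]

/-- `aD F n i` is the image of `a^i` (the `i`-th power of the rotation `a = r 1`)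
in the dihedral group algebra. -/
noncomputable def aD (F : Type*) [Field F] (n : ℕ) (i : ℤ) :
    MonoidAlgebra F (DihedralGroup n) :=
  MonoidAlgebra.of F (DihedralGroup n) (DihedralGroup.r (i : ZMod n))

/-- `bD F n` is the image of the reflection `b = sr 0` in the dihedral group algebra. -/
noncomputable def bD (F : Type*) [Field F] (n : ℕ) :
    MonoidAlgebra F (DihedralGroup n) :=
  MonoidAlgebra.of F (DihedralGroup n) (DihedralGroup.sr 0)

namespace AntiBAux

open DihedralGroup Finsupp

variable {F : Type*} [Field F] {n : ℕ}

instance instCoeFunMA : CoeFun (MonoidAlgebra F (DihedralGroup n)) (fun _ => DihedralGroup n → F) :=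
  ⟨fun x => x.coeff⟩


lemma ma_neg_apply (f : MonoidAlgebra F (DihedralGroup n)) (t : DihedralGroup n) :
    (-f) t = -(f t) := rfl

lemma ma_sub_apply (f g : MonoidAlgebra F (DihedralGroup n)) (t : DihedralGroup n) :
    (f - g) t = f t - g t := rfl

lemma ma_add_apply (f g : MonoidAlgebra F (DihedralGroup n)) (t : DihedralGroup n) :
    (f + g) t = f t + g t := rfl

lemma ma_smul_apply (c : F) (f : MonoidAlgebra F (DihedralGroup n)) (t : DihedralGroup n) :
    (c • f) t = c * f t := rfl

lemma ma_single_apply (a t : DihedralGroup n) (c : F) :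
    (MonoidAlgebra.single a c) t = if a = t then c else 0 := by
  rw [MonoidAlgebra.coeff_single]; exact Finsupp.single_apply

lemma ma_zero_apply (t : DihedralGroup n) : (0 : MonoidAlgebra F (DihedralGroup n)) t = 0 :=
  rfl

lemma ma_sum_apply {ι : Type*} (s : Finset ι) (f : ι → MonoidAlgebra F (DihedralGroup n))
    (t : DihedralGroup n) : (∑ i ∈ s, f i) t = ∑ i ∈ s, f i t :=
  by rw [MonoidAlgebra.coeff_sum]; exact Finsupp.finset_sum_apply _ _ _

lemma sr_inv (i : ZMod n) : (sr i : DihedralGroup n)⁻¹ = sr i :=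
  inv_eq_of_mul_eq_one_right (sr_mul_self i)

lemma bD_eq : bD F n = MonoidAlgebra.single (sr 0) (1 : F) := rfl

lemma mem_iff (α : MonoidAlgebra F (DihedralGroup n)) :
    α ∈ antiCentralizer F (DihedralGroup n) (bD F n) ↔
      (∀ k : ZMod n, α (r (-k)) = -α (r k)) ∧ ∀ k : ZMod n, α (sr (-k)) = -α (sr k) := by
  have hmem : (α ∈ antiCentralizer F (DihedralGroup n) (bD F n)) ↔
      α * bD F n = -(bD F n * α) := Iff.rfl
  rw [hmem, ← MonoidAlgebra.coeff_inj, Finsupp.ext_iff]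
  constructor
  · intro h
    constructor
    · intro k
      have := h (sr k)
      simpa [bD_eq, sr_inv, ma_neg_apply] using this
    · intro k
      have := h (r k)
      simpa [bD_eq, sr_inv, ma_neg_apply] using this
  · rintro ⟨h1, h2⟩ g
    rcases g with k | k
    · simpa [bD_eq, sr_inv, ma_neg_apply] using h2 k
    · simpa [bD_eq, sr_inv, ma_neg_apply] using h1 k

/-- canonical ZMod element for an index. -/
def cm (n : ℕ) (i : Fin ((n - 1) / 2)) : ZMod n := (((i : ℕ) + 1 : ℕ) : ZMod n)

lemma cm_lt (hn : 3 ≤ n) (i : Fin ((n - 1) / 2)) : (i : ℕ) + 1 < n := by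
  have := i.2; omega

lemma cm_inj (hn : 3 ≤ n) {i i' : Fin ((n - 1) / 2)} (h : cm n i = cm n i') : i = i' := by
  have := congrArg ZMod.val h
  rw [cm, cm, ZMod.val_cast_of_lt (cm_lt hn i), ZMod.val_cast_of_lt (cm_lt hn i')] at this
  exact Fin.ext (by omega)

lemma cm_ne_neg (hn : 3 ≤ n) (i i' : Fin ((n - 1) / 2)) : cm n i ≠ -cm n i' := by
  intro h
  have h0 : ((((i : ℕ) + 1) + ((i' : ℕ) + 1) : ℕ) : ZMod n) = 0 := by
    push_cast
    rw [cm, cm] at h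
    push_cast at h
    rw [h]; ring
  rw [ZMod.natCast_eq_zero_iff] at h0
  have h1 := i.2; have h2 := i'.2
  have := Nat.le_of_dvd (by omega) h0
  omega

/-- The basis family in the ambient group algebra. -/
noncomputable def vv (F : Type*) [Field F] (n : ℕ) :
    Fin ((n - 1) / 2) ⊕ Fin ((n - 1) / 2) → MonoidAlgebra F (DihedralGroup n)
  | Sum.inl i => aD F n ((i : ℤ) + 1) - aD F n (-((i : ℤ) + 1))
  | Sum.inr i => (aD F n ((i : ℤ) + 1) - aD F n (-((i : ℤ) + 1))) * bD F n

lemma cast_cm (i : Fin ((n - 1) / 2)) : (((i : ℤ) + 1 : ℤ) : ZMod n) = cm n i := by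
  rw [cm]; push_cast; ring

lemma vv_inl (i : Fin ((n - 1) / 2)) :
    vv F n (Sum.inl i) =
      MonoidAlgebra.single (r (cm n i)) 1 - MonoidAlgebra.single (r (-cm n i)) 1 := by
  show aD F n ((i : ℤ) + 1) - aD F n (-((i : ℤ) + 1)) = _
  rw [aD, aD, MonoidAlgebra.of_apply, MonoidAlgebra.of_apply]
  rw [show ((-((i : ℤ) + 1) : ℤ) : ZMod n) = -(((i : ℤ) + 1 : ℤ) : ZMod n) by push_cast; ring]
  rw [cast_cm]

lemma vv_inr (i : Fin ((n - 1) / 2)) :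
    vv F n (Sum.inr i) =
      MonoidAlgebra.single (sr (-cm n i)) 1 - MonoidAlgebra.single (sr (cm n i)) 1 := by
  show (aD F n ((i : ℤ) + 1) - aD F n (-((i : ℤ) + 1))) * bD F n = _
  rw [show aD F n ((i : ℤ) + 1) - aD F n (-((i : ℤ) + 1)) = vv F n (Sum.inl i) from rfl,
    vv_inl, bD_eq, sub_mul, MonoidAlgebra.single_mul_single, MonoidAlgebra.single_mul_single]
  simp

lemma bD_sq : bD F n * bD F n = 1 := by
  rw [bD, ← map_mul, sr_mul_self, map_one]

lemma mul_bD_mem {α : MonoidAlgebra F (DihedralGroup n)}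
    (h : α ∈ antiCentralizer F (DihedralGroup n) (bD F n)) :
    α * bD F n ∈ antiCentralizer F (DihedralGroup n) (bD F n) := by
  have h' : α * bD F n = -(bD F n * α) := h
  show α * bD F n * bD F n = -(bD F n * (α * bD F n))
  rw [mul_assoc, bD_sq, mul_one, h', mul_neg, ← mul_assoc, bD_sq, one_mul, neg_neg]

lemma vv_mem (j : Fin ((n - 1) / 2) ⊕ Fin ((n - 1) / 2)) :
    vv F n j ∈ antiCentralizer F (DihedralGroup n) (bD F n) := by
  have hl : ∀ i, vv F n (Sum.inl i) ∈ antiCentralizer F (DihedralGroup n) (bD F n) := by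
    intro i
    show vv F n (Sum.inl i) * bD F n = -(bD F n * vv F n (Sum.inl i))
    rw [vv_inl, bD_eq]
    simp only [sub_mul, mul_sub, MonoidAlgebra.single_mul_single, one_mul, mul_one,
      r_mul_sr, sr_mul_r, zero_sub, zero_add, sub_neg_eq_add, neg_neg]
    rw [neg_sub]
  rcases j with i | i
  · exact hl i
  · exact mul_bD_mem (hl i)

lemma vv_li (hn : 3 ≤ n) : LinearIndependent F (vv F n) := by
  haveI : NeZero n := ⟨by omega⟩
  rw [Fintype.linearIndependent_iff]
  intro g hg
  have eval : ∀ t : DihedralGroup n, (∑ j, g j * vv F n j t) = 0 := by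
    intro t
    have h0 := congrArg (fun f : MonoidAlgebra F (DihedralGroup n) => f t) hg
    simpa only [ma_sum_apply, ma_smul_apply, ma_zero_apply] using h0
  intro j
  rcases j with i | i
  · have h := eval (r (cm n i))
    rw [Fintype.sum_sum_type] at h
    have h2 : ∀ i' : Fin ((n - 1) / 2), g (Sum.inr i') * vv F n (Sum.inr i') (r (cm n i)) = 0 := by
      intro i'
      rw [vv_inr, ma_sub_apply, ma_single_apply, ma_single_apply]
      simp
    have h1 : ∀ i' : Fin ((n - 1) / 2), g (Sum.inl i') * vv F n (Sum.inl i') (r (cm n i)) =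
        if i' = i then g (Sum.inl i) else 0 := by
      intro i'
      rw [vv_inl]
      rw [ma_sub_apply, ma_single_apply, ma_single_apply]
      rw [if_neg (show ¬ r (-cm n i') = r (cm n i) by
        simp only [r.injEq]; exact fun hc => cm_ne_neg hn i i' hc.symm)]
      by_cases hii : i' = i
      · subst hii
        simp
      · rw [if_neg (show ¬ r (cm n i') = r (cm n i) by
          simp only [r.injEq]; exact fun hc => hii (cm_inj hn hc)), if_neg hii]
        ring
    rw [Finset.sum_congr rfl (fun i' _ => h1 i'), Finset.sum_congr rfl (fun i' _ => h2 i'),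
      Finset.sum_const, smul_zero, add_zero, Finset.sum_ite_eq' Finset.univ i] at h
    simpa using h
  · have h := eval (sr (cm n i))
    rw [Fintype.sum_sum_type] at h
    have h1 : ∀ i' : Fin ((n - 1) / 2), g (Sum.inl i') * vv F n (Sum.inl i') (sr (cm n i)) = 0 := by
      intro i'
      rw [vv_inl, ma_sub_apply, ma_single_apply, ma_single_apply]
      simp
    have h2 : ∀ i' : Fin ((n - 1) / 2), g (Sum.inr i') * vv F n (Sum.inr i') (sr (cm n i)) =
        if i' = i then -g (Sum.inr i) else 0 := by
      intro i'
      rw [vv_inr]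
      rw [ma_sub_apply, ma_single_apply, ma_single_apply]
      rw [if_neg (show ¬ sr (-cm n i') = sr (cm n i) by
        simp only [sr.injEq]; exact fun hc => cm_ne_neg hn i i' hc.symm)]
      by_cases hii : i' = i
      · subst hii
        simp
      · rw [if_neg (show ¬ sr (cm n i') = sr (cm n i) by
          simp only [sr.injEq]; exact fun hc => hii (cm_inj hn hc)), if_neg hii]
        ring
    rw [Finset.sum_congr rfl (fun i' _ => h1 i'), Finset.sum_congr rfl (fun i' _ => h2 i'),
      Finset.sum_const, smul_zero, zero_add, Finset.sum_ite_eq' Finset.univ i] at h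
    simp only [Finset.mem_univ, if_true, neg_eq_zero] at h
    exact h

lemma diff_mem_span (hn : 3 ≤ n) (f : ZMod n → MonoidAlgebra F (DihedralGroup n))
    (p : Submodule F (MonoidAlgebra F (DihedralGroup n)))
    (H : ∀ i : Fin ((n - 1) / 2), f (cm n i) - f (-cm n i) ∈ p)
    (k : ZMod n) : f k - f (-k) ∈ p := by
  haveI : NeZero n := ⟨by omega⟩
  by_cases hk : k = -k
  · rw [← hk, sub_self]; exact p.zero_mem
  have hval : ((k.val : ℕ) : ZMod n) = k := ZMod.natCast_zmod_val k
  have hlt : k.val < n := ZMod.val_lt k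
  have hne0 : k.val ≠ 0 := by
    intro h0
    apply hk
    have hk0 : k = 0 := by rw [← hval, h0, Nat.cast_zero]
    rw [hk0, neg_zero]
  have h2n : 2 * k.val ≠ n := by
    intro h2
    apply hk
    have : k + k = 0 := by
      rw [← hval, ← Nat.cast_add, show k.val + k.val = n by omega, ZMod.natCast_self]
    linear_combination this
  rcases Nat.lt_or_ge (2 * k.val) n with hlt2 | hge2
  · have := H ⟨k.val - 1, by omega⟩
    rw [show cm n ⟨k.val - 1, by omega⟩ = k by
      rw [cm]; simp only [Fin.val_mk]
      rw [show k.val - 1 + 1 = k.val by omega, hval]] at this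
    exact this
  · have hgt : 2 * k.val > n := by omega
    have := H ⟨n - k.val - 1, by omega⟩
    rw [show cm n ⟨n - k.val - 1, by omega⟩ = -k by
      rw [cm]; simp only [Fin.val_mk]
      rw [show n - k.val - 1 + 1 = n - k.val by omega, Nat.cast_sub (le_of_lt hlt),
        ZMod.natCast_self, hval]; ring] at this
    rw [neg_neg] at this
    have := p.neg_mem this
    rwa [neg_sub] at this

lemma mem_span_vv (hn : 3 ≤ n) (h2F : (2 : F) ≠ 0)
    {α : MonoidAlgebra F (DihedralGroup n)}
    (hα : α ∈ antiCentralizer F (DihedralGroup n) (bD F n)) :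
    α ∈ Submodule.span F (Set.range (vv F n)) := by
  haveI : NeZero n := ⟨by omega⟩
  set P := Submodule.span F (Set.range (vv F n)) with hP
  obtain ⟨h1, h2⟩ := (mem_iff α).mp hα
  have her : ∀ k : ZMod n,
      (MonoidAlgebra.single (r k) 1 - MonoidAlgebra.single (r (-k)) 1 :
        MonoidAlgebra F (DihedralGroup n)) ∈ P := by
    refine diff_mem_span hn (fun k => MonoidAlgebra.single (r k) 1) P (fun i => ?_)
    rw [← vv_inl]
    exact Submodule.subset_span ⟨Sum.inl i, rfl⟩
  have hes : ∀ k : ZMod n,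
      (MonoidAlgebra.single (sr k) 1 - MonoidAlgebra.single (sr (-k)) 1 :
        MonoidAlgebra F (DihedralGroup n)) ∈ P := by
    refine diff_mem_span hn (fun k => MonoidAlgebra.single (sr k) 1) P (fun i => ?_)
    have hmem : vv F n (Sum.inr i) ∈ Set.range (vv F n) := Set.mem_range_self _
    have := P.neg_mem (Submodule.subset_span hmem)
    rwa [vv_inr, neg_sub] at this
  have key : (2 : F) • α = ∑ k : ZMod n,
      (α (r k) • (MonoidAlgebra.single (r k) 1 - MonoidAlgebra.single (r (-k)) 1) +
       α (sr k) • (MonoidAlgebra.single (sr k) 1 - MonoidAlgebra.single (sr (-k)) 1)) := by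
    refine MonoidAlgebra.ext (Finsupp.ext fun g => ?_)
    have happ : (∑ k : ZMod n,
        (α (r k) • (MonoidAlgebra.single (r k) 1 - MonoidAlgebra.single (r (-k)) 1) +
         α (sr k) • (MonoidAlgebra.single (sr k) 1 - MonoidAlgebra.single (sr (-k)) 1) :
          MonoidAlgebra F (DihedralGroup n))) g
        = ∑ k : ZMod n,
        (α (r k) * ((MonoidAlgebra.single (r k) 1 - MonoidAlgebra.single (r (-k)) 1 :
          MonoidAlgebra F (DihedralGroup n)) g) +
         α (sr k) * ((MonoidAlgebra.single (sr k) 1 - MonoidAlgebra.single (sr (-k)) 1 :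
          MonoidAlgebra F (DihedralGroup n)) g)) := by
      simp only [ma_sum_apply, ma_add_apply, ma_smul_apply]
    rw [happ, ma_smul_apply]
    rcases g with t | t
    · have : ∀ k : ZMod n,
          (α (r k) * ((MonoidAlgebra.single (r k) 1 - MonoidAlgebra.single (r (-k)) 1 :
            MonoidAlgebra F (DihedralGroup n)) (r t)) +
           α (sr k) * ((MonoidAlgebra.single (sr k) 1 - MonoidAlgebra.single (sr (-k)) 1 :
            MonoidAlgebra F (DihedralGroup n)) (r t)))
          = α (r k) * ((if k = t then (1:F) else 0) - if k = -t then (1:F) else 0) := by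
        intro k
        rw [ma_sub_apply, ma_sub_apply, ma_single_apply, ma_single_apply,
          ma_single_apply, ma_single_apply]
        simp only [r.injEq, sr.injEq, reduceCtorEq, if_false, sub_zero, mul_zero, add_zero,
          neg_eq_iff_eq_neg]
      rw [Finset.sum_congr rfl (fun k _ => this k)]
      simp only [mul_sub, mul_ite, mul_one, mul_zero, Finset.sum_sub_distrib,
        Finset.sum_ite_eq' Finset.univ, Finset.mem_univ, if_true]
      rw [h1 t]
      ring
    · have : ∀ k : ZMod n,
          (α (r k) * ((MonoidAlgebra.single (r k) 1 - MonoidAlgebra.single (r (-k)) 1 :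
            MonoidAlgebra F (DihedralGroup n)) (sr t)) +
           α (sr k) * ((MonoidAlgebra.single (sr k) 1 - MonoidAlgebra.single (sr (-k)) 1 :
            MonoidAlgebra F (DihedralGroup n)) (sr t)))
          = α (sr k) * ((if k = t then (1:F) else 0) - if k = -t then (1:F) else 0) := by
        intro k
        rw [ma_sub_apply, ma_sub_apply, ma_single_apply, ma_single_apply,
          ma_single_apply, ma_single_apply]
        simp only [r.injEq, sr.injEq, reduceCtorEq, if_false, sub_zero, mul_zero, zero_add,
          sub_self, zero_mul, neg_eq_iff_eq_neg]
      rw [Finset.sum_congr rfl (fun k _ => this k)]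
      simp only [mul_sub, mul_ite, mul_one, mul_zero, Finset.sum_sub_distrib,
        Finset.sum_ite_eq' Finset.univ, Finset.mem_univ, if_true]
      rw [h2 t]
      ring
  have hsum : (2 : F) • α ∈ P := by
    rw [key]
    exact Submodule.sum_mem _ fun k _ =>
      P.add_mem (P.smul_mem _ (her k)) (P.smul_mem _ (hes k))
  have : α = (2 : F)⁻¹ • ((2 : F) • α) := by
    rw [smul_smul, inv_mul_cancel₀ h2F, one_smul]
  rw [this]
  exact P.smul_mem _ hsum

end AntiBAux

/-- For a field `F` of characteristic `0` or an odd prime, the set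
`{a^i - a^{-i}, (a^i - a^{-i}) b : 1 ≤ i ≤ ⌊(n-1)/2⌋}` is an `F`-basis of the
anti-centralizer `C̄(b)` in `F D_{2n}`. -/
theorem basis_antiCentralizer_b (F : Type*) [Field F] (n : ℕ) (hn : 3 ≤ n)
    (hchar : ringChar F = 0 ∨ (Nat.Prime (ringChar F) ∧ Odd (ringChar F))) :
    ∃ B : Module.Basis (Fin ((n - 1) / 2) ⊕ Fin ((n - 1) / 2)) F
        (antiCentralizer F (DihedralGroup n) (bD F n)),
      (∀ i : Fin ((n - 1) / 2),
          (B (Sum.inl i) : MonoidAlgebra F (DihedralGroup n)) =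
            aD F n ((i : ℤ) + 1) - aD F n (-((i : ℤ) + 1))) ∧
      (∀ i : Fin ((n - 1) / 2),
          (B (Sum.inr i) : MonoidAlgebra F (DihedralGroup n)) =
            (aD F n ((i : ℤ) + 1) - aD F n (-((i : ℤ) + 1))) * bD F n) := by
  classical
  haveI : NeZero n := ⟨by omega⟩
  have h2F : (2 : F) ≠ 0 := by
    intro h
    haveI := ringChar.charP F
    have hdvd : ringChar F ∣ 2 := by
      have := (CharP.cast_eq_zero_iff F (ringChar F) 2).mp (by exact_mod_cast h)
      exact this
    rcases hchar with h0 | ⟨hp, hodd⟩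
    · rw [h0] at hdvd
      simp at hdvd
    · have := (Nat.prime_dvd_prime_iff_eq hp Nat.prime_two).mp hdvd
      rw [this] at hodd
      exact (by decide : ¬ Odd 2) hodd
  set S := antiCentralizer F (DihedralGroup n) (bD F n) with hS
  let w : Fin ((n - 1) / 2) ⊕ Fin ((n - 1) / 2) → S :=
    fun j => ⟨AntiBAux.vv F n j, AntiBAux.vv_mem j⟩
  have hcomp : S.subtype ∘ w = AntiBAux.vv F n := rfl
  have hli : LinearIndependent F w :=
    LinearIndependent.of_comp S.subtype (hcomp ▸ AntiBAux.vv_li hn)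
  have hsp : ⊤ ≤ Submodule.span F (Set.range w) := by
    rintro ⟨x, hx⟩ -
    have hx' : x ∈ Submodule.span F (Set.range (AntiBAux.vv F n)) :=
      AntiBAux.mem_span_vv hn h2F hx
    have himg : Submodule.map S.subtype (Submodule.span F (Set.range w)) =
        Submodule.span F (Set.range (AntiBAux.vv F n)) := by
      rw [Submodule.map_span, ← Set.range_comp, hcomp]
    rw [← himg] at hx'
    obtain ⟨y, hy, hxy⟩ := hx'
    have hyx : y = ⟨x, hx⟩ := Subtype.ext hxy
    rwa [← hyx]
  refine ⟨Module.Basis.mk hli hsp, fun i => ?_, fun i => ?_⟩ <;> rw [Module.Basis.mk_apply] <;> rfl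
end

section
/- Let n ≥ 3 and let F be a field of characteristic 0 or of odd prime characteristic p. In the group algebra F D_{2n} of the dihedral group D_{2n} = ⟨a, b | aⁿ = b² = (ab)² = 1⟩, the set {aⁱ − a⁻ⁱ, a(aⁱ − a⁻ⁱ)b : i = 1, 2, ..., ⌊(n−1)/2⌋} is an F-basis of the anti-centralizer C̄(ab) = {α ∈ F D_{2n} : α(ab) = −(ab)α}. -/
open MonoidAlgebra

private lemma sum_pick {F : Type*} [Field F] {m : ℕ} {γ : Type*} [DecidableEq γ]
    (f : Fin m → F) (g : Fin m → γ) (x : γ) (i₀ : Fin m) (hg : g i₀ = x)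
    (huniq : ∀ j, g j = x → j = i₀) :
    ∑ i, f i * (if g i = x then (1 : F) else 0) = f i₀ := by
  rw [Finset.sum_eq_single i₀]
  · simp [hg]
  · intro j _ hj
    have : g j ≠ x := fun h => hj (huniq j h)
    simp [this]
  · simp

private lemma sum_pick0 {F : Type*} [Field F] {m : ℕ} {γ : Type*} [DecidableEq γ]
    (f : Fin m → F) (g : Fin m → γ) (x : γ) (h : ∀ i, g i ≠ x) :
    ∑ i, f i * (if g i = x then (1 : F) else 0) = 0 :=
  Finset.sum_eq_zero fun i _ => by simp [h i]

open DihedralGroup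

/-- For a field `F` of characteristic `0` or an odd prime, the set
`{a^i - a^{-i}, a (a^i - a^{-i}) b : 1 ≤ i ≤ ⌊(n-1)/2⌋}` is an `F`-basis of the
anti-centralizer `C̄(ab)` in `F D_{2n}`. -/
theorem basis_antiCentralizer_ab (F : Type*) [Field F] (n : ℕ) (hn : 3 ≤ n)
    (hchar : ringChar F = 0 ∨ (Nat.Prime (ringChar F) ∧ Odd (ringChar F))) :
    ∃ B : Module.Basis (Fin ((n - 1) / 2) ⊕ Fin ((n - 1) / 2)) F
        (antiCentralizer F (DihedralGroup n) (aD F n 1 * bD F n)),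
      (∀ i : Fin ((n - 1) / 2),
          (B (Sum.inl i) : MonoidAlgebra F (DihedralGroup n)) =
            aD F n ((i : ℤ) + 1) - aD F n (-((i : ℤ) + 1))) ∧
      (∀ i : Fin ((n - 1) / 2),
          (B (Sum.inr i) : MonoidAlgebra F (DihedralGroup n)) =
            aD F n 1 * (aD F n ((i : ℤ) + 1) - aD F n (-((i : ℤ) + 1))) * bD F n) := by
  have hn0 : NeZero n := ⟨by omega⟩
  set m := (n - 1) / 2 with hm
  have hm2 : 2 * m ≤ n - 1 := by omega
  -- characteristic ≠ 2
  have h2 : (2 : F) ≠ 0 := by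
    intro h20
    have : ringChar F ∣ 2 := (ringChar.spec F 2).mp (by exact_mod_cast h20)
    rcases hchar with h | ⟨hp, hodd⟩
    · rw [h] at this
      exact absurd (Nat.eq_zero_of_zero_dvd this) (by norm_num)
    · have h22 := (Nat.prime_dvd_prime_iff_eq hp Nat.prime_two).mp this
      rw [h22] at hodd
      simp [Nat.odd_iff] at hodd
  -- divisibility helpers in ZMod n
  have hdvd : ∀ a : ℕ, ((a : ZMod n) = 0) → n ∣ a := fun a h =>
    (ZMod.natCast_eq_zero_iff a n).mp h
  have hdvd_eq : ∀ a : ℕ, ((a : ZMod n) = 0) → a < 2 * n → a = 0 ∨ a = n := by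
    intro a h ha
    have hd := hdvd a h
    rcases Nat.lt_or_ge a n with h' | h'
    · exact Or.inl (Nat.eq_zero_of_dvd_of_lt hd h')
    · have h1 : n ∣ a - n := Nat.dvd_sub hd dvd_rfl
      have h2 := Nat.eq_zero_of_dvd_of_lt h1 (by omega)
      omega
  set β := aD F n 1 * bD F n with hβdef
  have hβ : β = single (sr (-1 : ZMod n)) (1 : F) := by
    simp [hβdef, aD, bD, MonoidAlgebra.of_apply, MonoidAlgebra.single_mul_single,
      zero_sub]
  set S := antiCentralizer F (DihedralGroup n) β with hS
  -- the candidate basis vectors in the ambient algebra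
  set v : (Fin m ⊕ Fin m) → MonoidAlgebra F (DihedralGroup n) :=
    Sum.elim
      (fun i => single (r ((((i : ℕ) + 1 : ℕ)) : ZMod n)) 1 -
        single (r (-((((i : ℕ) + 1 : ℕ)) : ZMod n))) 1)
      (fun i => single (sr (-((((i : ℕ) + 2 : ℕ)) : ZMod n))) 1 -
        single (sr (((i : ℕ) : ℕ) : ZMod n)) 1) with hv
  have hv1 : ∀ i : Fin m, v (Sum.inl i) =
      aD F n ((i : ℤ) + 1) - aD F n (-((i : ℤ) + 1)) := by
    intro i
    simp only [hv, Sum.elim_inl, aD, MonoidAlgebra.of_apply]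
    congr 2 <;> push_cast <;> ring
  have hv2 : ∀ i : Fin m,
      aD F n 1 * (aD F n ((i : ℤ) + 1) - aD F n (-((i : ℤ) + 1))) * bD F n =
        v (Sum.inr i) := by
    intro i
    simp only [hv, Sum.elim_inr, aD, bD, MonoidAlgebra.of_apply, mul_sub, sub_mul,
      MonoidAlgebra.single_mul_single, r_mul_r, r_mul_sr, one_mul, mul_one]
    congr 3 <;> push_cast <;> ring
  -- membership
  have hmem : ∀ i, v i ∈ S := by
    rintro (i | i) <;>
    · show _ * β = -(β * _)
      rw [hβ]
      simp only [hv, Sum.elim_inl, Sum.elim_inr, mul_sub, sub_mul, neg_sub,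
        MonoidAlgebra.single_mul_single, sr_mul_sr, r_mul_sr, sr_mul_r, mul_one, one_mul]
      congr 3 <;> push_cast <;> ring
  -- apply lemma bridging MonoidAlgebra/Finsupp instance mismatch
  have happly : ∀ (c : F) (a b x : DihedralGroup n),
      ((c • (single a (1 : F) - single b 1) : MonoidAlgebra F (DihedralGroup n))).coeff x =
        c * ((if a = x then (1 : F) else 0) - if b = x then (1 : F) else 0) := by
    intro c a b x
    rw [smul_sub, MonoidAlgebra.smul_single', MonoidAlgebra.smul_single',
      MonoidAlgebra.coeff_sub, MonoidAlgebra.coeff_single, MonoidAlgebra.coeff_single,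
      Finsupp.sub_apply, Finsupp.single_apply, Finsupp.single_apply, mul_one, mul_sub]
    split_ifs <;> ring
  -- evaluation of a general linear combination at group elements
  have hEvalr : ∀ (c : Fin m ⊕ Fin m → F) (k : ZMod n),
      (∑ i, c i • v i).coeff (r k) =
        (∑ i : Fin m, c (Sum.inl i) *
            (if ((((i : ℕ) + 1 : ℕ)) : ZMod n) = k then (1 : F) else 0)) -
        ∑ i : Fin m, c (Sum.inl i) *
            (if -((((i : ℕ) + 1 : ℕ)) : ZMod n) = k then (1 : F) else 0) := by
    intro c k
    rw [MonoidAlgebra.coeff_sum, Finsupp.finset_sum_apply, Fintype.sum_sum_type]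
    simp only [hv, Sum.elim_inl, Sum.elim_inr, happly, mul_sub, Finset.sum_sub_distrib,
      DihedralGroup.r.injEq, DihedralGroup.sr.injEq, reduceCtorEq, if_false,
      mul_zero, sub_zero, zero_sub, Finset.sum_const_zero, add_zero, sub_self,
      neg_zero, zero_add, sub_neg_eq_add, neg_sub]
  have hEvals : ∀ (c : Fin m ⊕ Fin m → F) (k : ZMod n),
      (∑ i, c i • v i).coeff (sr k) =
        (∑ i : Fin m, c (Sum.inr i) *
            (if -((((i : ℕ) + 2 : ℕ)) : ZMod n) = k then (1 : F) else 0)) -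
        ∑ i : Fin m, c (Sum.inr i) *
            (if (((i : ℕ) : ℕ) : ZMod n) = k then (1 : F) else 0) := by
    intro c k
    rw [MonoidAlgebra.coeff_sum, Finsupp.finset_sum_apply, Fintype.sum_sum_type]
    simp only [hv, Sum.elim_inl, Sum.elim_inr, happly, mul_sub, Finset.sum_sub_distrib,
      DihedralGroup.r.injEq, DihedralGroup.sr.injEq, reduceCtorEq, if_false,
      mul_zero, sub_zero, zero_sub, Finset.sum_const_zero, add_zero, sub_self,
      neg_zero, zero_add, sub_neg_eq_add, neg_sub]
  have hinj : ∀ a b : ℕ, a < n → b < n → ((a : ZMod n) = (b : ZMod n)) → a = b :=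
    fun a b ha hb h => ((ZMod.natCast_eq_natCast_iff _ _ _).mp h).eq_of_lt_of_lt ha hb
  have hneg0 : ∀ a b : ℕ, 0 < a + b → a + b < n → ¬(-(a : ZMod n) = (b : ZMod n)) := by
    intro a b h0 hlt h
    rw [neg_eq_iff_add_eq_zero, ← Nat.cast_add] at h
    have := Nat.eq_zero_of_dvd_of_lt (hdvd _ h) hlt
    omega
  -- linear independence in the ambient algebra
  have li : LinearIndependent F v := by
    rw [Fintype.linearIndependent_iff]
    intro c hc
    have hcl : ∀ i₀ : Fin m, c (Sum.inl i₀) = 0 := by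
      intro i₀
      have h : (∑ i, c i • v i).coeff (r ((((i₀ : ℕ) + 1 : ℕ)) : ZMod n)) = 0 := by
        rw [hc]; rfl
      rw [hEvalr c, sum_pick _ _ _ i₀ rfl ?uniq, sum_pick0 _ _ _ ?z] at h
      · simpa using h
      case uniq =>
        intro j hj
        exact Fin.ext (by
          have := hinj _ _ (by omega) (by omega) hj
          omega)
      case z =>
        intro i
        exact hneg0 _ _ (by omega) (by omega)
    have hcr : ∀ i₀ : Fin m, c (Sum.inr i₀) = 0 := by
      intro i₀
      have h : (∑ i, c i • v i).coeff (sr (((i₀ : ℕ) : ℕ) : ZMod n)) = 0 := by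
        rw [hc]; rfl
      rw [hEvals c, sum_pick _ _ _ i₀ rfl ?uniq, sum_pick0 _ _ _ ?z] at h
      · simpa using h
      case uniq =>
        intro j hj
        exact Fin.ext (hinj _ _ (by omega) (by omega) hj)
      case z =>
        intro i
        exact hneg0 _ _ (by omega) (by omega)
    rintro (i | i)
    · exact hcl i
    · exact hcr i
  -- spanning: every element of S is the explicit combination
  have hspan_aux : ∀ α : MonoidAlgebra F (DihedralGroup n), α ∈ S →
      α = ∑ i, (Sum.elim (fun i : Fin m => α.coeff (r ((((i : ℕ) + 1 : ℕ)) : ZMod n)))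
        (fun i : Fin m => -(α.coeff (sr (((i : ℕ) : ℕ) : ZMod n)))) i) • v i := by
    intro α hα
    have hα' : α * β = -(β * α) := hα
    -- coefficient antisymmetry relations
    have hcrel : ∀ j : ZMod n, α.coeff (r (-j)) = -(α.coeff (r j)) := by
      intro j
      have h : (α * β).coeff (sr (j - 1)) =
          (-(β * α) : MonoidAlgebra F (DihedralGroup n)).coeff (sr (j - 1)) := by rw [hα']
      rw [hβ, MonoidAlgebra.coeff_mul_single_apply, MonoidAlgebra.coeff_neg, Finsupp.neg_apply,
        MonoidAlgebra.coeff_single_mul_apply, one_mul, mul_one,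
        show ((sr (-1 : ZMod n))⁻¹ : DihedralGroup n) = sr (-1) from rfl,
        sr_mul_sr, sr_mul_sr, show (-1 - (j - 1) : ZMod n) = -j by ring,
        show ((j - 1) - -1 : ZMod n) = j by ring] at h
      exact h
    have hdrel : ∀ j : ZMod n, α.coeff (sr (-j - 2)) = -(α.coeff (sr j)) := by
      intro j
      have h : (α * β).coeff (r (j + 1)) =
          (-(β * α) : MonoidAlgebra F (DihedralGroup n)).coeff (r (j + 1)) := by rw [hα']
      rw [hβ, MonoidAlgebra.coeff_mul_single_apply, MonoidAlgebra.coeff_neg, Finsupp.neg_apply,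
        MonoidAlgebra.coeff_single_mul_apply, one_mul, mul_one,
        show ((sr (-1 : ZMod n))⁻¹ : DihedralGroup n) = sr (-1) from rfl,
        r_mul_sr, sr_mul_r, show (-1 - (j + 1) : ZMod n) = -j - 2 by ring,
        show (-1 + (j + 1) : ZMod n) = j by ring] at h
      exact h
    refine MonoidAlgebra.ext (Finsupp.ext ?_)
    rintro (k | k)
    · rw [hEvalr]
      have hkl : k.val < n := ZMod.val_lt k
      have hk : ((k.val : ℕ) : ZMod n) = k := by rw [ZMod.natCast_val, ZMod.cast_id]
      by_cases hcase : 1 ≤ k.val ∧ k.val ≤ m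
      · rw [sum_pick _ _ _ ⟨k.val - 1, by omega⟩ ?hg ?uniq, sum_pick0 _ _ _ ?z, sub_zero,
          Sum.elim_inl]
        case hg =>
          show (((k.val - 1 + 1 : ℕ)) : ZMod n) = k
          rw [show k.val - 1 + 1 = k.val by omega, hk]
        case uniq =>
          intro j hj
          rw [← hk] at hj
          have := hinj _ _ (by omega) (by omega) hj
          refine Fin.ext ?_
          show (j : ℕ) = k.val - 1
          omega
        case z =>
          intro i
          rw [← hk]
          exact hneg0 _ _ (by omega) (by omega)
        show α.coeff (r k) = α.coeff (r (((k.val - 1 + 1 : ℕ)) : ZMod n))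
        rw [show k.val - 1 + 1 = k.val by omega, hk]
      by_cases hcase2 : n - m ≤ k.val
      · have hkneg : -(((n - k.val : ℕ)) : ZMod n) = k := by
          rw [neg_eq_iff_add_eq_zero]
          have hz : (((n - k.val : ℕ)) : ZMod n) + ((k.val : ℕ) : ZMod n) = 0 := by
            rw [← Nat.cast_add, show n - k.val + k.val = n by omega]
            exact ZMod.natCast_self n
          rwa [hk] at hz
        rw [sum_pick0 _ _ _ ?z, sum_pick _ _ _ ⟨n - k.val - 1, by omega⟩ ?hg ?uniq, zero_sub,
          Sum.elim_inl]
        case z =>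
          intro i
          rw [← hk]
          intro h
          have := hinj _ _ (by omega) (by omega) h
          omega
        case hg =>
          show -(((n - k.val - 1 + 1 : ℕ)) : ZMod n) = k
          rw [show n - k.val - 1 + 1 = n - k.val by omega]
          exact hkneg
        case uniq =>
          intro j hj
          rw [← hk, neg_eq_iff_add_eq_zero, ← Nat.cast_add] at hj
          rcases hdvd_eq _ hj (by omega) with h | h
          · omega
          · refine Fin.ext ?_
            show (j : ℕ) = n - k.val - 1
            omega
        have : α.coeff (r k) = -(α.coeff (r (((n - k.val - 1 + 1 : ℕ)) : ZMod n))) := by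
          rw [← hcrel, show n - k.val - 1 + 1 = n - k.val by omega, hkneg]
        rw [this]
      · -- self-paired case: α.coeff (r k) = 0
        have h2k : k + k = 0 := by
          have hp : ((2 * k.val : ℕ) : ZMod n) = 0 := by
            rcases (by omega : 2 * k.val = 0 ∨ 2 * k.val = n) with h | h <;> rw [h]
            · simp
            · exact ZMod.natCast_self n
          push_cast at hp
          rw [← hk]
          linear_combination hp
        have h0 : α.coeff (r k) = 0 := by
          have hh := hcrel k
          rw [show (-k : ZMod n) = k by linear_combination -h2k] at hh
          have h2a : (2 : F) * α.coeff (r k) = 0 := by linear_combination hh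
          exact (mul_eq_zero.mp h2a).resolve_left h2
        rw [sum_pick0 _ _ _ ?z1, sum_pick0 _ _ _ ?z2, h0, sub_zero]
        case z1 =>
          intro i h
          have hz : (((2 * ((i : ℕ) + 1) : ℕ)) : ZMod n) = 0 := by
            push_cast at h ⊢
            linear_combination 2 * h + h2k
          have := Nat.eq_zero_of_dvd_of_lt (hdvd _ hz) (by omega)
          omega
        case z2 =>
          intro i h
          have hz : (((2 * ((i : ℕ) + 1) : ℕ)) : ZMod n) = 0 := by
            push_cast at h ⊢
            linear_combination (-2 : ZMod n) * h - h2k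
          have := Nat.eq_zero_of_dvd_of_lt (hdvd _ hz) (by omega)
          omega
    · rw [hEvals]
      have hkl : k.val < n := ZMod.val_lt k
      have hk : ((k.val : ℕ) : ZMod n) = k := by rw [ZMod.natCast_val, ZMod.cast_id]
      by_cases hcase : k.val ≤ m - 1
      · rw [sum_pick0 _ _ _ ?z, sum_pick _ _ _ ⟨k.val, by omega⟩ ?hg ?uniq, zero_sub,
          Sum.elim_inr, neg_neg]
        case z =>
          intro i
          rw [← hk]
          exact hneg0 _ _ (by omega) (by omega)
        case hg =>
          show ((k.val : ℕ) : ZMod n) = k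
          exact hk
        case uniq =>
          intro j hj
          rw [← hk] at hj
          have := hinj _ _ (by omega) (by omega) hj
          refine Fin.ext ?_
          show (j : ℕ) = k.val
          omega
        show α.coeff (sr k) = α.coeff (sr ((k.val : ℕ) : ZMod n))
        rw [hk]
      by_cases hcase2 : n - m - 1 ≤ k.val ∧ k.val ≤ n - 2
      · have hkneg : -(((n - k.val : ℕ)) : ZMod n) = k := by
          rw [neg_eq_iff_add_eq_zero]
          have hz : (((n - k.val : ℕ)) : ZMod n) + ((k.val : ℕ) : ZMod n) = 0 := by
            rw [← Nat.cast_add, show n - k.val + k.val = n by omega]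
            exact ZMod.natCast_self n
          rwa [hk] at hz
        have hsplit : (((n - k.val - 2 : ℕ)) : ZMod n) + 2 = (((n - k.val : ℕ)) : ZMod n) := by
          rw [show n - k.val = n - k.val - 2 + 2 by omega]
          push_cast
          ring
        rw [sum_pick _ _ _ ⟨n - k.val - 2, by omega⟩ ?hg ?uniq, sum_pick0 _ _ _ ?z, sub_zero,
          Sum.elim_inr]
        case hg =>
          show -(((n - k.val - 2 + 2 : ℕ)) : ZMod n) = k
          rw [show n - k.val - 2 + 2 = n - k.val by omega]
          exact hkneg
        case uniq =>
          intro j hj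
          rw [← hk, neg_eq_iff_add_eq_zero, ← Nat.cast_add] at hj
          rcases hdvd_eq _ hj (by omega) with h | h
          · omega
          · refine Fin.ext ?_
            show (j : ℕ) = n - k.val - 2
            omega
        case z =>
          intro i
          rw [← hk]
          intro h
          have := hinj _ _ (by omega) (by omega) h
          omega
        have : α.coeff (sr k) = -(α.coeff (sr (((n - k.val - 2 : ℕ)) : ZMod n))) := by
          rw [← hdrel, show -((((n - k.val - 2 : ℕ)) : ZMod n)) - 2 = k by
            linear_combination hkneg - hsplit]
        rw [this]
      · -- self-paired case: α.coeff (sr k) = 0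
        have h2k : k + k + 2 = 0 := by
          have hp : ((2 * k.val + 2 : ℕ) : ZMod n) = 0 := by
            rcases (by omega : 2 * k.val + 2 = n ∨ 2 * k.val + 2 = 2 * n) with h | h <;> rw [h]
            · exact ZMod.natCast_self n
            · push_cast
              rw [ZMod.natCast_self]
              ring
          push_cast at hp
          rw [← hk]
          linear_combination hp
        have h0 : α.coeff (sr k) = 0 := by
          have hh := hdrel k
          rw [show (-k - 2 : ZMod n) = k by linear_combination -h2k] at hh
          have h2a : (2 : F) * α.coeff (sr k) = 0 := by linear_combination hh
          exact (mul_eq_zero.mp h2a).resolve_left h2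
        rw [sum_pick0 _ _ _ ?z1, sum_pick0 _ _ _ ?z2, h0, sub_zero]
        case z1 =>
          intro i h
          have hz : (((2 * (i : ℕ) + 2 : ℕ)) : ZMod n) = 0 := by
            push_cast at h ⊢
            linear_combination (-2 : ZMod n) * h - h2k
          have := Nat.eq_zero_of_dvd_of_lt (hdvd _ hz) (by omega)
          omega
        case z2 =>
          intro i h
          have hz : (((2 * (i : ℕ) + 2 : ℕ)) : ZMod n) = 0 := by
            push_cast at h ⊢
            linear_combination 2 * h + h2k
          have := Nat.eq_zero_of_dvd_of_lt (hdvd _ hz) (by omega)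
          omega
  -- assemble the basis
  let w : (Fin m ⊕ Fin m) → S := fun i => ⟨v i, hmem i⟩
  have hwli : LinearIndependent F w := by
    apply LinearIndependent.of_comp S.subtype
    convert li
    rfl
  have hwspan : ⊤ ≤ Submodule.span F (Set.range w) := by
    rintro ⟨α, hα⟩ -
    have hexp := hspan_aux α hα
    have : (⟨α, hα⟩ : S) = ∑ i, (Sum.elim (fun i : Fin m => α.coeff (r ((((i : ℕ) + 1 : ℕ)) : ZMod n)))
        (fun i : Fin m => -(α.coeff (sr (((i : ℕ) : ℕ) : ZMod n)))) i) • w i := by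
      apply Subtype.ext
      show α = _
      rw [AddSubmonoidClass.coe_finset_sum]
      simp only [SetLike.val_smul, w]
      exact hexp
    rw [this]
    exact Submodule.sum_mem _ fun i _ =>
      Submodule.smul_mem _ _ (Submodule.subset_span ⟨i, rfl⟩)
  refine ⟨Module.Basis.mk hwli hwspan, fun i => ?_, fun i => ?_⟩
  · rw [Module.Basis.mk_apply]
    exact hv1 i
  · rw [Module.Basis.mk_apply]
    exact (hv2 i).symm
end

section
/- Let n ≥ 3 and let F be a field that is an algebraic extension of its prime field, of characteristic 0 or of odd prime characteristic p with p ∤ n. Then every derivation of the dihedral group algebra F D_{2n} is inner: for every additive map d : F D_{2n} → F D_{2n} satisfying d(xy) = d(x)y + x d(y) for all x, y, there exists β ∈ F D_{2n} such that d(α) = αβ − βα for all α ∈ F D_{2n}. -/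
open MonoidAlgebra

private lemma aux_deriv_bot_zero (F : Type*) [Field F] [Algebra.IsAlgebraic (⊥ : Subfield F) F]
    [PerfectField (⊥ : Subfield F)] (D : Derivation (⊥ : Subfield F) F F) (x : F) : D x = 0 := by
  haveI : Algebra.FormallyUnramified (⊥ : Subfield F) F :=
    Algebra.FormallyUnramified.of_isSeparable _ _
  rw [← D.liftKaehlerDifferential_comp_D x,
    Subsingleton.elim (KaehlerDifferential.D (⊥ : Subfield F) F x) 0, map_zero]

private lemma aux_perfect_zero (F : Type*) [Field F] (h : ringChar F = 0) :
    PerfectField (⊥ : Subfield F) := by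
  haveI : CharP F 0 := h ▸ ringChar.charP F
  haveI : CharZero F := CharP.charP_to_charZero F
  haveI : CharZero (⊥ : Subfield F) :=
    ⟨fun a b hab => Nat.cast_injective (R := F) (by
      have := congrArg (Subfield.subtype ⊥) hab
      simpa using this)⟩
  infer_instance

private lemma aux_perfect_p (F : Type*) [Field F] (hp : Nat.Prime (ringChar F)) :
    PerfectField (⊥ : Subfield F) := by
  set p := ringChar F
  haveI : CharP F p := ringChar.charP F
  haveI : Fact (Nat.Prime p) := ⟨hp⟩
  have hle : (⊥ : Subfield F) ≤ (ZMod.castHom (dvd_refl p) F).fieldRange := bot_le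
  haveI : Finite ((ZMod.castHom (dvd_refl p) F).fieldRange) :=
    (Set.finite_range (ZMod.castHom (dvd_refl p) F)).to_subtype
  haveI : Finite (⊥ : Subfield F) := Finite.of_injective _ (Subfield.inclusion hle).injective
  infer_instance

private lemma aux_scalar (F : Type*) [Field F] [Algebra.IsAlgebraic (⊥ : Subfield F) F]
    [PerfectField (⊥ : Subfield F)] (n : ℕ)
    (d : MonoidAlgebra F (DihedralGroup n) →+ MonoidAlgebra F (DihedralGroup n))
    (hd : ∀ x y : MonoidAlgebra F (DihedralGroup n), d (x * y) = d x * y + x * d y) :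
    ∀ c : F, d (algebraMap F (MonoidAlgebra F (DihedralGroup n)) c) = 0 := by
  set A := MonoidAlgebra F (DihedralGroup n)
  have hd1 : d 1 = 0 := by
    have h := hd 1 1
    simp only [mul_one, one_mul] at h
    exact (left_eq_add.mp h)
  have hleib : ∀ (c c' : F), d (algebraMap F A (c * c'))
      = c • d (algebraMap F A c') + c' • d (algebraMap F A c) := by
    intro c c'
    rw [map_mul, hd, ← Algebra.smul_def, ← Algebra.commutes, ← Algebra.smul_def, add_comm]
  have hbot : ∀ c ∈ (⊥ : Subfield F), d (algebraMap F A c) = 0 := by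
    intro c hc
    have hc' : c ∈ Subfield.closure (∅ : Set F) := by rwa [Subfield.closure_empty]
    clear hc
    induction hc' using Subfield.closure_induction with
    | mem x hx => exact absurd hx (Set.notMem_empty x)
    | one => rw [map_one]; exact hd1
    | add x y hx hy ihx ihy => rw [map_add, map_add, ihx, ihy, add_zero]
    | neg x hx ihx => rw [map_neg, map_neg, ihx, neg_zero]
    | inv x hx ihx =>
      by_cases h0 : x = 0
      · simp [h0]
      · have h := hleib x x⁻¹
        rw [mul_inv_cancel₀ h0, map_one, hd1, ihx, smul_zero, add_zero] at h
        exact ((smul_eq_zero.mp h.symm).resolve_left h0)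
    | mul x y hx hy ihx ihy =>
      rw [hleib, ihx, ihy, smul_zero, smul_zero, add_zero]
  intro c
  ext g
  let D : Derivation (⊥ : Subfield F) F F :=
    { toFun := fun c => (d (algebraMap F A c)).coeff g
      map_add' := fun a b => by
        show (d (algebraMap F A (a + b))).coeff g
          = (d (algebraMap F A a)).coeff g + (d (algebraMap F A b)).coeff g
        rw [map_add, map_add]; rfl
      map_smul' := fun r a => by
        simp only [RingHom.id_apply]
        show (d (algebraMap F A (r • a))).coeff g = r • (d (algebraMap F A a)).coeff g
        have : d (algebraMap F A ((r : F) * a)) = (r : F) • d (algebraMap F A a) := by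
          rw [hleib, hbot _ r.2, smul_zero, add_zero]
        rw [show r • a = (r : F) * a from rfl, this, MonoidAlgebra.coeff_smul_apply]
        rfl
      map_one_eq_zero' := by
        show (d (algebraMap F A 1)).coeff g = 0
        rw [map_one, hd1]; rfl
      leibniz' := fun a b => by
        show (d (algebraMap F A (a * b))).coeff g = _
        rw [hleib, MonoidAlgebra.coeff_add, Finsupp.add_apply, MonoidAlgebra.coeff_smul_apply,
          MonoidAlgebra.coeff_smul_apply]
        rfl }
  have := aux_deriv_bot_zero F D c
  exact this

private lemma aux_main (F : Type*) [Field F] (n : ℕ) (hn : 3 ≤ n)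
    (hchar : ringChar F = 0 ∨
      (Nat.Prime (ringChar F) ∧ Odd (ringChar F) ∧ ¬ ringChar F ∣ n))
    (d : MonoidAlgebra F (DihedralGroup n) →+ MonoidAlgebra F (DihedralGroup n))
    (hd : ∀ x y : MonoidAlgebra F (DihedralGroup n), d (x * y) = d x * y + x * d y)
    (hlin : ∀ (c : F) (x : MonoidAlgebra F (DihedralGroup n)), d (c • x) = c • d x) :
    ∃ β : MonoidAlgebra F (DihedralGroup n),
      ∀ α : MonoidAlgebra F (DihedralGroup n), d α = α * β - β * α := by
  classical
  haveI : NeZero n := ⟨by omega⟩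
  let G := DihedralGroup n
  set A := MonoidAlgebra F G
  set φ : G →* A := MonoidAlgebra.of F G with hφ
  have h2n : ((2 * n : ℕ) : F) ≠ 0 := by
    rcases hchar with h0 | ⟨hp, hodd, hdvd⟩
    · haveI : CharP F 0 := h0 ▸ ringChar.charP F
      haveI : CharZero F := CharP.charP_to_charZero F
      exact Nat.cast_ne_zero.mpr (by omega)
    · haveI : CharP F (ringChar F) := ringChar.charP F
      intro h
      rw [CharP.cast_eq_zero_iff F (ringChar F)] at h
      rcases (Nat.Prime.dvd_mul hp).mp h with h2 | hn'
      · have hpeq : ringChar F = 2 := (Nat.prime_dvd_prime_iff_eq hp Nat.prime_two).mp h2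
        rw [hpeq] at hodd
        exact (Nat.not_odd_iff_even.mpr even_two) hodd
      · exact hdvd hn'
  set S : A := ∑ g : G, d (φ g) * φ g⁻¹ with hS
  have key : ∀ g : G, ((2 * n : ℕ) : F) • d (φ g) = S * φ g - φ g * S := by
    intro g
    have hinv : ∀ h : G, (φ h) * φ h⁻¹ = 1 := fun h => by
      rw [← map_mul, mul_inv_cancel, map_one]
    have hinv2 : ∀ (h : G) (x : A), φ h * (φ h⁻¹ * x) = x := fun h x => by
      rw [← mul_assoc, hinv, one_mul]
    have hpt : ∀ h : G, d (φ (g * h)) * φ (g * h)⁻¹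
        = d (φ g) * φ g⁻¹ + φ g * (d (φ h) * (φ h⁻¹ * φ g⁻¹)) := by
      intro h
      rw [mul_inv_rev, map_mul φ g h, hd, map_mul φ h⁻¹ g⁻¹, add_mul]
      simp only [mul_assoc, hinv2]
    have hre : ∑ h : G, d (φ (g * h)) * φ (g * h)⁻¹ = S :=
      Fintype.sum_equiv (Equiv.mulLeft g) _ (fun x => d (φ x) * φ x⁻¹) (fun h => rfl)
    have e2 : ∑ h : G, φ g * (d (φ h) * (φ h⁻¹ * φ g⁻¹)) = φ g * (S * φ g⁻¹) := by
      rw [hS, Finset.sum_mul, Finset.mul_sum]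
      simp only [mul_assoc]
    have hsum : S = (Fintype.card G) • (d (φ g) * φ g⁻¹) + φ g * (S * φ g⁻¹) := by
      conv_lhs => rw [← hre]
      rw [Finset.sum_congr rfl (fun h _ => hpt h), Finset.sum_add_distrib, Finset.sum_const,
        Finset.card_univ, e2]
    have hcard : (Fintype.card G) = 2 * n := DihedralGroup.card
    have hg : (φ g⁻¹ : A) * φ g = 1 := by rw [← map_mul, inv_mul_cancel, map_one]
    have hmul := congrArg (· * φ g) hsum
    simp only [add_mul, smul_mul_assoc, mul_assoc, hg, mul_one] at hmul
    rw [hcard, ← Nat.cast_smul_eq_nsmul F (2 * n) (d (φ g))] at hmul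
    rw [eq_sub_iff_add_eq]
    exact hmul.symm
  set c : F := (((2 * n : ℕ) : F))⁻¹ with hc
  refine ⟨-(c • S), ?_⟩
  have hof : ∀ g : G, d (φ g) = φ g * -(c • S) - -(c • S) * φ g := by
    intro g
    have hk : d (φ g) = c • (S * φ g - φ g * S) := by
      rw [← key g, smul_smul, hc, inv_mul_cancel₀ h2n, one_smul]
    rw [hk]
    rw [smul_sub, mul_neg, neg_mul, sub_neg_eq_add, mul_smul_comm, smul_mul_assoc]
    abel
  have hsingle : ∀ (a : G) (b : F),
      d (MonoidAlgebra.single a b)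
        = MonoidAlgebra.single a b * -(c • S) - -(c • S) * MonoidAlgebra.single a b := by
    intro a b
    have h1 : (MonoidAlgebra.single a b : A) = b • φ a := by
      rw [hφ, MonoidAlgebra.of_apply, MonoidAlgebra.smul_single', mul_one]
    rw [h1, hlin, hof a, smul_sub, smul_mul_assoc, mul_smul_comm]
  intro α
  induction α using MonoidAlgebra.induction with
  | zero => simp
  | single_add a b f hf hb ih =>
    rw [map_add, ih, hsingle, add_mul, mul_add]
    abel

/-- If `F` is an algebraic extension of its prime field (the bottom subfield of `F`)
of characteristic `0` or of odd prime characteristic `p` with `p ∤ n`, then every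
derivation of the dihedral group algebra `F D_{2n}` is inner. -/
theorem derivations_dihedral_inner (F : Type*) [Field F]
    [Algebra.IsAlgebraic (⊥ : Subfield F) F] (n : ℕ) (hn : 3 ≤ n)
    (hchar : ringChar F = 0 ∨
      (Nat.Prime (ringChar F) ∧ Odd (ringChar F) ∧ ¬ ringChar F ∣ n))
    (d : MonoidAlgebra F (DihedralGroup n) →+ MonoidAlgebra F (DihedralGroup n))
    (hd : ∀ x y : MonoidAlgebra F (DihedralGroup n), d (x * y) = d x * y + x * d y) :
    ∃ β : MonoidAlgebra F (DihedralGroup n),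
      ∀ α : MonoidAlgebra F (DihedralGroup n), d α = α * β - β * α := by
  haveI : PerfectField (⊥ : Subfield F) := by
    rcases hchar with h0 | ⟨hp, _, _⟩
    · exact aux_perfect_zero F h0
    · exact aux_perfect_p F hp
  have hscal := aux_scalar F n d hd
  have hlin : ∀ (c : F) (x : MonoidAlgebra F (DihedralGroup n)), d (c • x) = c • d x := by
    intro c x
    rw [Algebra.smul_def, hd, hscal, zero_mul, zero_add, ← Algebra.smul_def]
  exact aux_main F n hn hchar d hd hlin
end

section
/- Let n ≥ 3 and let F be a field that is an algebraic extension of its prime field, of odd prime characteristic p with p ∣ n. Then the dihedral group algebra F D_{2n} has a non-zero outer derivation: there exists an additive map d : F D_{2n} → F D_{2n} satisfying d(xy) = d(x)y + x d(y) for all x, y, such that for every β ∈ F D_{2n} there is some α with d(α) ≠ αβ − βα. -/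
open MonoidAlgebra

/-- Index of a dihedral group element. -/
def dihIdx {n : ℕ} : DihedralGroup n → ZMod n
  | .r i => i
  | .sr i => i

@[simp] theorem dihIdx_r {n : ℕ} (i : ZMod n) : dihIdx (DihedralGroup.r i) = i := rfl
@[simp] theorem dihIdx_sr {n : ℕ} (i : ZMod n) : dihIdx (DihedralGroup.sr i) = i := rfl

/-- The cocycle `g ↦ χ(idx g) • (g·r 1 − g·r (−1))`. -/
noncomputable def dihPhi {F : Type*} [Field F] {n : ℕ} (χ : ZMod n →+* F)
    (g : DihedralGroup n) : MonoidAlgebra F (DihedralGroup n) :=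
  MonoidAlgebra.single (g * .r 1) (χ (dihIdx g)) -
    MonoidAlgebra.single (g * .r (-1)) (χ (dihIdx g))

theorem dihPhi_cocycle {F : Type*} [Field F] {n : ℕ} (χ : ZMod n →+* F)
    (g h : DihedralGroup n) :
    dihPhi χ (g * h) =
      dihPhi χ g * MonoidAlgebra.single h 1 + MonoidAlgebra.single g 1 * dihPhi χ h := by
  obtain (i | i) := g <;> obtain (j | j) := h <;>
    · simp only [dihPhi, dihIdx_r, dihIdx_sr, DihedralGroup.r_mul_r, DihedralGroup.r_mul_sr,
        DihedralGroup.sr_mul_r, DihedralGroup.sr_mul_sr, sub_mul, mul_sub,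
        MonoidAlgebra.single_mul_single, mul_one, one_mul]
      ring_nf
      simp only [map_add, map_sub, map_one, MonoidAlgebra.single_add, MonoidAlgebra.single_sub,
          neg_smul, one_smul, MonoidAlgebra.single_neg]
      abel

noncomputable def dihD {F : Type*} [Field F] {n : ℕ} (χ : ZMod n →+* F) :
    MonoidAlgebra F (DihedralGroup n) →ₗ[F] MonoidAlgebra F (DihedralGroup n) :=
  Finsupp.lsum F (fun g => LinearMap.id.smulRight (dihPhi χ g)) ∘ₗ
    (MonoidAlgebra.coeffLinearEquiv F).toLinearMap

theorem dihD_single {F : Type*} [Field F] {n : ℕ} (χ : ZMod n →+* F)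
    (g : DihedralGroup n) (c : F) :
    dihD χ (MonoidAlgebra.single g c) = c • dihPhi χ g := by
  rw [dihD]
  erw [LinearMap.comp_apply, Finsupp.lsum_apply, Finsupp.sum_single_index] <;> simp

theorem single_smul_single' {F : Type*} [Field F] {n : ℕ} (h : DihedralGroup n) (b : F) :
    MonoidAlgebra.single (R := F) h b = b • MonoidAlgebra.single h 1 := by
  rw [MonoidAlgebra.smul_single', mul_one]

theorem dihD_leibniz {F : Type*} [Field F] {n : ℕ} (χ : ZMod n →+* F)
    (x y : MonoidAlgebra F (DihedralGroup n)) :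
    dihD χ (x * y) = dihD χ x * y + x * dihD χ y := by
  induction x using MonoidAlgebra.induction_linear with
  | zero => simp
  | add a b ha hb =>
    simp only [add_mul, map_add, ha, hb]; abel
  | single g a =>
    induction y using MonoidAlgebra.induction_linear with
    | zero => simp
    | add c e hc he =>
      simp only [mul_add, map_add, hc, he]; abel
    | single h b =>
      rw [MonoidAlgebra.single_mul_single, dihD_single, dihD_single, dihD_single,
        dihPhi_cocycle, smul_add]
      have e1 : (MonoidAlgebra.single h b : MonoidAlgebra F (DihedralGroup n))
          = b • (MonoidAlgebra.single h (1:F)) := by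
        rw [MonoidAlgebra.smul_single', mul_one]
      have e2 : (MonoidAlgebra.single g a : MonoidAlgebra F (DihedralGroup n))
          = a • (MonoidAlgebra.single g (1:F)) := by
        rw [MonoidAlgebra.smul_single', mul_one]
      rw [e1, e2, smul_mul_assoc, smul_mul_assoc, mul_smul_comm, mul_smul_comm,
        smul_smul, smul_smul]

/-- If `F` is an algebraic extension of its prime field (the bottom subfield of `F`)
of odd prime characteristic `p` with `p ∣ n`, then the dihedral group algebra
`F D_{2n}` has a non-zero outer derivation. -/
theorem exists_outer_derivation_dihedral (F : Type*) [Field F]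
    [Algebra.IsAlgebraic (⊥ : Subfield F) F] (n : ℕ) (hn : 3 ≤ n)
    (hchar : Nat.Prime (ringChar F) ∧ Odd (ringChar F) ∧ ringChar F ∣ n) :
    ∃ d : MonoidAlgebra F (DihedralGroup n) →+ MonoidAlgebra F (DihedralGroup n),
      (∀ x y : MonoidAlgebra F (DihedralGroup n), d (x * y) = d x * y + x * d y) ∧
      ∀ β : MonoidAlgebra F (DihedralGroup n),
        ∃ α : MonoidAlgebra F (DihedralGroup n), d α ≠ α * β - β * α := by
  haveI : CharP F (ringChar F) := ringChar.charP F
  set χ : ZMod n →+* F := ZMod.castHom hchar.2.2 F with hχ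
  refine ⟨(dihD χ).toAddMonoidHom, fun x y => dihD_leibniz χ x y, ?_⟩
  intro β
  refine ⟨MonoidAlgebra.single (.r 1) 1, fun hEq => ?_⟩
  have h2 : (2 : ZMod n) ≠ 0 := by
    intro h
    have h2' : ((2 : ℕ) : ZMod n) = 0 := by exact_mod_cast h
    have := (ZMod.natCast_eq_zero_iff 2 n).mp h2'
    have := Nat.le_of_dvd (by norm_num) this
    omega
  have hLHS : (dihD χ).toAddMonoidHom (MonoidAlgebra.single (.r 1) 1)
      = MonoidAlgebra.single (DihedralGroup.r (2 : ZMod n)) 1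
        - MonoidAlgebra.single (DihedralGroup.r (0 : ZMod n)) 1 := by
    show dihD χ (MonoidAlgebra.single (.r 1) 1) = _
    show dihD χ _ = _
    rw [dihD_single, one_smul, dihPhi]
    norm_num
  rw [hLHS] at hEq
  have hcoeff := congrArg (fun f => f.coeff (DihedralGroup.r (2 : ZMod n))) hEq
  rw [MonoidAlgebra.coeff_sub, MonoidAlgebra.coeff_sub, Finsupp.sub_apply, Finsupp.sub_apply,
    MonoidAlgebra.coeff_single_mul_apply, MonoidAlgebra.coeff_mul_single_apply] at hcoeff
  have hinv : (DihedralGroup.r (1 : ZMod n))⁻¹ = DihedralGroup.r (-1 : ZMod n) := rfl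
  rw [hinv, DihedralGroup.r_mul_r, DihedralGroup.r_mul_r] at hcoeff
  have h1 : (-1 + 2 : ZMod n) = 1 := by ring
  have h1' : (2 + -1 : ZMod n) = 1 := by ring
  rw [h1, h1', one_mul, mul_one, sub_self] at hcoeff
  have hne : DihedralGroup.r (0 : ZMod n) ≠ DihedralGroup.r (2 : ZMod n) := by
    intro h
    exact h2 (DihedralGroup.r.inj h).symm
  rw [MonoidAlgebra.coeff_single, MonoidAlgebra.coeff_single, Finsupp.single_apply, Finsupp.single_apply, if_pos rfl, if_neg hne] at hcoeff
  norm_num at hcoeff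
end

section
/- Let n ≥ 2 and let F be a field of characteristic 0 or of odd prime characteristic p. In the group algebra F T_{4n} of the dicyclic group T_{4n} = ⟨a, b | a^{2n} = 1, b² = aⁿ, b⁻¹ab = a⁻¹⟩, the set {aⁱ − a⁻ⁱ, (aⁱ − a⁻ⁱ)b : i = 1, 2, ..., n−1} is an F-basis of the anti-centralizer C̄(b) = {α ∈ F T_{4n} : αb = −bα}. -/
open MonoidAlgebra

/-- `aQ F n i` is the image of `a^i` (with `a = QuaternionGroup.a 1`) in the
dicyclic group algebra `F T_{4n}`. -/
noncomputable def aQ (F : Type*) [Field F] (n : ℕ) (i : ℤ) :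
    MonoidAlgebra F (QuaternionGroup n) :=
  MonoidAlgebra.of F (QuaternionGroup n) (QuaternionGroup.a (i : ZMod (2 * n)))

/-- `bQ F n` is the image of `b = QuaternionGroup.xa 0` in the dicyclic group
algebra `F T_{4n}`. -/
noncomputable def bQ (F : Type*) [Field F] (n : ℕ) :
    MonoidAlgebra F (QuaternionGroup n) :=
  MonoidAlgebra.of F (QuaternionGroup n) (QuaternionGroup.xa 0)

open QuaternionGroup

namespace AntiCB

variable (F : Type*) [Field F] (n : ℕ)

lemma mem_AC_iff (α : MonoidAlgebra F (QuaternionGroup n)) :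
    α ∈ antiCentralizer F (QuaternionGroup n) (bQ F n) ↔
      α * MonoidAlgebra.single (xa 0) 1 = -(MonoidAlgebra.single (xa 0) 1 * α) := Iff.rfl

variable {F n}

/- pointwise evaluation helpers -/
lemma MA_neg_apply (f : MonoidAlgebra F (QuaternionGroup n)) (g : QuaternionGroup n) :
    (-f).coeff g = -(f.coeff g) := rfl

lemma MA_add_apply (f f' : MonoidAlgebra F (QuaternionGroup n)) (g : QuaternionGroup n) :
    (f + f').coeff g = f.coeff g + f'.coeff g := rfl

lemma MA_sub_apply (f f' : MonoidAlgebra F (QuaternionGroup n)) (g : QuaternionGroup n) :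
    (f - f').coeff g = f.coeff g - f'.coeff g := rfl

lemma MA_smul_apply (c : F) (f : MonoidAlgebra F (QuaternionGroup n)) (g : QuaternionGroup n) :
    (c • f).coeff g = c * f.coeff g := rfl

lemma MA_single_apply (g h : QuaternionGroup n) (c : F) :
    (MonoidAlgebra.single g c).coeff h = if g = h then c else 0 := Finsupp.single_apply

lemma MA_sum_apply {ι : Type*} (s : Finset ι) (f : ι → MonoidAlgebra F (QuaternionGroup n))
    (g : QuaternionGroup n) : (∑ i ∈ s, f i).coeff g = ∑ i ∈ s, (f i).coeff g := by
  rw [MonoidAlgebra.coeff_sum, Finsupp.finset_sum_apply]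

lemma xa_zero_inv : ((xa 0 : QuaternionGroup n))⁻¹ = xa (n : ZMod (2*n)) := by
  symm; apply eq_inv_of_mul_eq_one_left
  rw [xa_mul_xa, one_def]; congr 1; ring

lemma nn_zero : (n : ZMod (2*n)) + n = 0 := by
  rw [← Nat.cast_add, ← two_mul, ZMod.natCast_self]

lemma rel_a (α : MonoidAlgebra F (QuaternionGroup n))
    (h : α ∈ antiCentralizer F (QuaternionGroup n) (bQ F n))
    (i : ZMod (2*n)) : α.coeff (a (-i)) = - α.coeff (a i) := by
  rw [mem_AC_iff] at h
  have := congr_arg (fun f : MonoidAlgebra F (QuaternionGroup n) => f.coeff (xa (-i))) h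
  simp only [MonoidAlgebra.mul_single_apply, MA_neg_apply, MonoidAlgebra.single_mul_apply,
    xa_zero_inv, xa_mul_xa, mul_one, one_mul] at this
  rw [show (n : ZMod (2*n)) + n - -i = i from by rw [nn_zero, zero_sub, neg_neg],
    show (n : ZMod (2*n)) + -i - n = -i from by ring] at this
  rw [this, neg_neg]

lemma rel_xa (α : MonoidAlgebra F (QuaternionGroup n))
    (h : α ∈ antiCentralizer F (QuaternionGroup n) (bQ F n))
    (i : ZMod (2*n)) : α.coeff (xa (-i)) = - α.coeff (xa i) := by
  rw [mem_AC_iff] at h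
  have := congr_arg (fun f : MonoidAlgebra F (QuaternionGroup n) => f.coeff (a ((n : ZMod (2*n)) - i))) h
  simp only [MonoidAlgebra.mul_single_apply, MA_neg_apply, MonoidAlgebra.single_mul_apply,
    xa_zero_inv, a_mul_xa, xa_mul_a, mul_one, one_mul] at this
  rw [show (n : ZMod (2*n)) - (n - i) = i from by ring,
    show (n : ZMod (2*n)) + (n - i) = -i from by rw [← add_sub_assoc, nn_zero, zero_sub]] at this
  rw [this, neg_neg]

variable (F n) in
/-- `a^i - a^{-i}` -/
noncomputable def Efam (i : ZMod (2*n)) : MonoidAlgebra F (QuaternionGroup n) :=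
  MonoidAlgebra.single (a i) 1 - MonoidAlgebra.single (a (-i)) 1

variable (F n) in
/-- `xa^i - xa^{-i}` -/
noncomputable def Xfam (i : ZMod (2*n)) : MonoidAlgebra F (QuaternionGroup n) :=
  MonoidAlgebra.single (xa i) 1 - MonoidAlgebra.single (xa (-i)) 1

lemma Efam_neg (i : ZMod (2*n)) : Efam F n (-i) = -(Efam F n i) := by
  rw [Efam, Efam, neg_neg, neg_sub]

lemma Xfam_neg (i : ZMod (2*n)) : Xfam F n (-i) = -(Xfam F n i) := by
  rw [Xfam, Xfam, neg_neg, neg_sub]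

lemma Efam_mem (i : ZMod (2*n)) :
    Efam F n i ∈ antiCentralizer F (QuaternionGroup n) (bQ F n) := by
  rw [mem_AC_iff, Efam]
  simp only [sub_mul, mul_sub, MonoidAlgebra.single_mul_single,
    a_mul_xa, xa_mul_a, one_mul, mul_one]
  ring_nf
  rw [neg_sub]

lemma Xfam_mem (i : ZMod (2*n)) :
    Xfam F n i ∈ antiCentralizer F (QuaternionGroup n) (bQ F n) := by
  rw [mem_AC_iff, Xfam]
  simp only [sub_mul, mul_sub, MonoidAlgebra.single_mul_single,
    xa_mul_xa, one_mul, mul_one]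
  ring_nf
  rw [neg_sub]


noncomputable def Sfam (F : Type*) [Field F] (n : ℕ) :
    Fin (n-1) ⊕ Fin (n-1) → MonoidAlgebra F (QuaternionGroup n)
  | .inl i => aQ F n ((i : ℤ) + 1) - aQ F n (-((i : ℤ) + 1))
  | .inr i => (aQ F n ((i : ℤ) + 1) - aQ F n (-((i : ℤ) + 1))) * bQ F n

lemma Sfam_inl (i : Fin (n-1)) :
    Sfam F n (Sum.inl i) = Efam F n (((i : ℕ) + 1 : ℕ)) := by
  rw [Sfam, Efam, aQ, aQ]
  simp only [MonoidAlgebra.of_apply]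
  norm_cast

lemma Sfam_inr (i : Fin (n-1)) :
    Sfam F n (Sum.inr i) = -(Xfam F n (((i : ℕ) + 1 : ℕ))) := by
  rw [Sfam, Xfam, aQ, aQ, bQ]
  simp only [MonoidAlgebra.of_apply, sub_mul, MonoidAlgebra.single_mul_single,
    a_mul_xa, one_mul, mul_one, neg_sub]
  rw [zero_sub]
  push_cast
  ring_nf

section Helper
variable {M : Type*} [AddCommGroup M] [Module F M]

lemma span_helper (hn : 2 ≤ n) (h2 : (2:F) ≠ 0) (p : Submodule F M)
    (v : ZMod (2*n) → M) (hneg : ∀ i, v (-i) = -v i)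
    (hmem : ∀ j : ℕ, 1 ≤ j → j ≤ n - 1 → v (j : ZMod (2*n)) ∈ p) :
    ∀ i, v i ∈ p := by
  haveI : NeZero (2*n) := ⟨by omega⟩
  have vzero : ∀ i : ZMod (2*n), v i = -v i → v i ∈ p := by
    intro i hi
    have : (2:F) • v i = 0 := by
      rw [two_smul]
      nth_rewrite 2 [hi]
      rw [add_neg_cancel]
    rcases smul_eq_zero.mp this with h | h
    · exact absurd h h2
    · rw [h]; exact p.zero_mem
  intro i
  have hval : ((i.val : ℕ) : ZMod (2*n)) = i := ZMod.natCast_zmod_val i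
  have hlt : i.val < 2*n := ZMod.val_lt i
  rcases show i.val = 0 ∨ (1 ≤ i.val ∧ i.val ≤ n-1) ∨ i.val = n ∨
      (n+1 ≤ i.val ∧ i.val ≤ 2*n-1) from by omega with h | ⟨h1, h2'⟩ | h | ⟨h1, h2'⟩
  · apply vzero
    have hi0 : i = 0 := by rw [← hval, h, Nat.cast_zero]
    rw [hi0]
    calc v 0 = v (-0) := by rw [neg_zero]
    _ = -v 0 := hneg 0
  · rw [← hval]; exact hmem _ h1 h2'
  · apply vzero
    have hni : -i = i := by
      rw [← hval, h, neg_eq_iff_add_eq_zero, ← Nat.cast_add, ← two_mul, ZMod.natCast_self]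
    nth_rewrite 1 [← hni]
    exact hneg i
  · have hnegi : -i = ((2*n - i.val : ℕ) : ZMod (2*n)) := by
      have hc : ((i.val + (2*n - i.val) : ℕ) : ZMod (2*n)) = 0 := by
        rw [show i.val + (2*n - i.val) = 2*n from by omega, ZMod.natCast_self]
      rw [Nat.cast_add, hval] at hc
      exact neg_eq_of_add_eq_zero_right hc
    have : v i = -(v ((2*n - i.val : ℕ) : ZMod (2*n))) := by
      rw [← hnegi, hneg, neg_neg]
    rw [this]
    exact p.neg_mem (hmem _ (by omega) (by omega))
end Helper

lemma MA_single_apply' (g h : QuaternionGroup n) (c : F) :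
    (MonoidAlgebra.single g c).coeff h = if g = h then c else 0 := Finsupp.single_apply

lemma MA_sum_apply' {ι : Type*} (s : Finset ι) (f : ι → MonoidAlgebra F (QuaternionGroup n))
    (g : QuaternionGroup n) : (∑ i ∈ s, f i).coeff g = ∑ i ∈ s, (f i).coeff g := by
  rw [MonoidAlgebra.coeff_sum, Finsupp.finset_sum_apply]

lemma MA_add_apply' (f f' : MonoidAlgebra F (QuaternionGroup n)) (g : QuaternionGroup n) :
    (f + f').coeff g = f.coeff g + f'.coeff g := rfl

lemma decomp [NeZero n] [NeZero (2*n)] (α : MonoidAlgebra F (QuaternionGroup n)) :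
    α = (∑ i : ZMod (2*n), MonoidAlgebra.single (a i) (α.coeff (a i)))
      + ∑ i : ZMod (2*n), MonoidAlgebra.single (xa i) (α.coeff (xa i)) := by
  refine MonoidAlgebra.ext (Finsupp.ext fun g => ?_)
  rcases g with j | j <;>
    simp [MA_add_apply', MA_sum_apply', MA_single_apply', Finsupp.single_apply]

lemma sum_Efam [NeZero n] [NeZero (2*n)] (α : MonoidAlgebra F (QuaternionGroup n))
    (hrel : ∀ i : ZMod (2*n), α.coeff (a (-i)) = - α.coeff (a i)) :
    ∑ i : ZMod (2*n), α.coeff (a i) • Efam F n i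
      = (2:F) • ∑ i : ZMod (2*n), MonoidAlgebra.single (a i) (α.coeff (a i)) := by
  have step1 : ∑ i : ZMod (2*n), α.coeff (a i) • Efam F n i
      = (∑ i : ZMod (2*n), α.coeff (a i) • MonoidAlgebra.single (a i) (1:F))
        - ∑ i : ZMod (2*n), α.coeff (a i) • MonoidAlgebra.single (a (-i)) (1:F) := by
    rw [← Finset.sum_sub_distrib]
    exact Finset.sum_congr rfl fun i _ => by rw [Efam, smul_sub]
  have step2 : ∑ i : ZMod (2*n), α.coeff (a (-i)) • MonoidAlgebra.single (a i) (1:F)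
      = ∑ i : ZMod (2*n), α.coeff (a i) • MonoidAlgebra.single (a (-i)) (1:F) :=
    Fintype.sum_equiv (Equiv.neg _) _ _ (fun i => by
      simp only [Equiv.neg_apply, neg_neg])
  have step3 : ∑ i : ZMod (2*n), α.coeff (a (-i)) • MonoidAlgebra.single (a i) (1:F)
      = -∑ i : ZMod (2*n), α.coeff (a i) • MonoidAlgebra.single (a i) (1:F) := by
    rw [← Finset.sum_neg_distrib]
    exact Finset.sum_congr rfl fun i _ => by rw [hrel i, neg_smul]
  rw [step1, ← step2, step3, sub_neg_eq_add, ← two_smul F]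
  refine congrArg _ (Finset.sum_congr rfl fun i _ => by
    rw [MonoidAlgebra.smul_single', mul_one])

lemma sum_Xfam [NeZero n] [NeZero (2*n)] (α : MonoidAlgebra F (QuaternionGroup n))
    (hrel : ∀ i : ZMod (2*n), α.coeff (xa (-i)) = - α.coeff (xa i)) :
    ∑ i : ZMod (2*n), α.coeff (xa i) • Xfam F n i
      = (2:F) • ∑ i : ZMod (2*n), MonoidAlgebra.single (xa i) (α.coeff (xa i)) := by
  have step1 : ∑ i : ZMod (2*n), α.coeff (xa i) • Xfam F n i
      = (∑ i : ZMod (2*n), α.coeff (xa i) • MonoidAlgebra.single (xa i) (1:F))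
        - ∑ i : ZMod (2*n), α.coeff (xa i) • MonoidAlgebra.single (xa (-i)) (1:F) := by
    rw [← Finset.sum_sub_distrib]
    exact Finset.sum_congr rfl fun i _ => by rw [Xfam, smul_sub]
  have step2 : ∑ i : ZMod (2*n), α.coeff (xa (-i)) • MonoidAlgebra.single (xa i) (1:F)
      = ∑ i : ZMod (2*n), α.coeff (xa i) • MonoidAlgebra.single (xa (-i)) (1:F) :=
    Fintype.sum_equiv (Equiv.neg _) _ _ (fun i => by
      simp only [Equiv.neg_apply, neg_neg])
  have step3 : ∑ i : ZMod (2*n), α.coeff (xa (-i)) • MonoidAlgebra.single (xa i) (1:F)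
      = -∑ i : ZMod (2*n), α.coeff (xa i) • MonoidAlgebra.single (xa i) (1:F) := by
    rw [← Finset.sum_neg_distrib]
    exact Finset.sum_congr rfl fun i _ => by rw [hrel i, neg_smul]
  rw [step1, ← step2, step3, sub_neg_eq_add, ← two_smul F]
  refine congrArg _ (Finset.sum_congr rfl fun i _ => by
    rw [MonoidAlgebra.smul_single', mul_one])

lemma key [NeZero n] [NeZero (2*n)] (h2 : (2:F) ≠ 0) (α : MonoidAlgebra F (QuaternionGroup n))
    (hrel_a : ∀ i : ZMod (2*n), α.coeff (a (-i)) = - α.coeff (a i))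
    (hrel_xa : ∀ i : ZMod (2*n), α.coeff (xa (-i)) = - α.coeff (xa i)) :
    α = (2⁻¹ : F) • ((∑ i : ZMod (2*n), α.coeff (a i) • Efam F n i)
        + ∑ i : ZMod (2*n), α.coeff (xa i) • Xfam F n i) := by
  rw [sum_Efam α hrel_a, sum_Xfam α hrel_xa, ← smul_add, smul_smul,
    inv_mul_cancel₀ h2, one_smul]
  exact decomp α

lemma fact_inj (i j : Fin (n-1)) :
    (((i:ℕ)+1 : ℕ) : ZMod (2*n)) = (((j:ℕ)+1 : ℕ) : ZMod (2*n)) ↔ i = j := by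
  constructor
  · intro h
    have hi := i.isLt
    have hj := j.isLt
    have := congrArg ZMod.val h
    rw [ZMod.val_cast_of_lt (by omega), ZMod.val_cast_of_lt (by omega)] at this
    exact Fin.ext (by omega)
  · intro h; rw [h]

lemma fact_ne [NeZero (2*n)] (i j : Fin (n-1)) :
    -((((j:ℕ)+1 : ℕ) : ZMod (2*n))) ≠ (((i:ℕ)+1 : ℕ) : ZMod (2*n)) := by
  intro h
  have hi := i.isLt
  have hj := j.isLt
  have hz : ((((i:ℕ)+1) + ((j:ℕ)+1) : ℕ) : ZMod (2*n)) = 0 := by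
    rw [Nat.cast_add, ← h, neg_add_cancel]
  rw [ZMod.natCast_eq_zero_iff] at hz
  have := Nat.le_of_dvd (by omega) hz
  omega

noncomputable def Tfam (F : Type*) [Field F] (n : ℕ) :
    Fin (n-1) ⊕ Fin (n-1) → QuaternionGroup n
  | .inl i => a (((i:ℕ)+1 : ℕ))
  | .inr i => xa (-(((i:ℕ)+1 : ℕ) : ZMod (2*n)))

noncomputable def Rmap (F : Type*) [Field F] (n : ℕ) :
    MonoidAlgebra F (QuaternionGroup n) →ₗ[F] ((Fin (n-1) ⊕ Fin (n-1)) → F) where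
  toFun α := fun k => α.coeff (Tfam F n k)
  map_add' := fun f g => funext fun k => rfl
  map_smul' := fun c f => funext fun k => rfl

lemma MA_sub_apply' (f f' : MonoidAlgebra F (QuaternionGroup n)) (g : QuaternionGroup n) :
    (f - f').coeff g = f.coeff g - f'.coeff g := rfl

lemma MA_neg_apply' (f : MonoidAlgebra F (QuaternionGroup n)) (g : QuaternionGroup n) :
    (-f).coeff g = -(f.coeff g) := rfl

lemma hcomp [NeZero (2*n)] :
    (Rmap F n) ∘ (Sfam F n) = fun k => Pi.single k (1:F) := by
  have aeq : ∀ u v : ZMod (2*n), ((a u : QuaternionGroup n) = a v) ↔ u = v :=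
    fun u v => ⟨fun h => by injection h, fun h => by rw [h]⟩
  have xaeq : ∀ u v : ZMod (2*n), ((xa u : QuaternionGroup n) = xa v) ↔ u = v :=
    fun u v => ⟨fun h => by injection h, fun h => by rw [h]⟩
  have axa : ∀ u v : ZMod (2*n), ((a u : QuaternionGroup n) ≠ xa v) := fun u v h => by injection h
  have xaa : ∀ u v : ZMod (2*n), ((xa u : QuaternionGroup n) ≠ a v) := fun u v h => by injection h
  funext k; rcases k with i | i <;> funext k' <;> rcases k' with i' | i'
  · show (Sfam F n (Sum.inl i)).coeff (a ((((i':ℕ)+1 : ℕ)) : ZMod (2*n))) = _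
    rw [Sfam_inl, Efam, MA_sub_apply', MA_single_apply', MA_single_apply',
      if_neg (fun hh => fact_ne i' i ((aeq _ _).mp hh)), sub_zero]
    by_cases h : i = i'
    · subst h; rw [if_pos rfl, Pi.single_eq_same]
    · rw [if_neg (fun hh => h ((fact_inj i i').mp ((aeq _ _).mp hh))),
        Pi.single_eq_of_ne (fun hh => h (Sum.inl.inj hh).symm)]
  · show (Sfam F n (Sum.inl i)).coeff (xa (-((((i':ℕ)+1 : ℕ)) : ZMod (2*n)))) = _
    rw [Sfam_inl, Efam, MA_sub_apply', MA_single_apply', MA_single_apply',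
      if_neg (axa _ _), if_neg (axa _ _), sub_zero,
      Pi.single_eq_of_ne (by simp)]
  · show (Sfam F n (Sum.inr i)).coeff (a ((((i':ℕ)+1 : ℕ)) : ZMod (2*n))) = _
    rw [Sfam_inr, Xfam, MA_neg_apply', MA_sub_apply', MA_single_apply', MA_single_apply',
      if_neg (xaa _ _), if_neg (xaa _ _), sub_zero, neg_zero,
      Pi.single_eq_of_ne (by simp)]
  · show (Sfam F n (Sum.inr i)).coeff (xa (-((((i':ℕ)+1 : ℕ)) : ZMod (2*n)))) = _
    rw [Sfam_inr, Xfam, MA_neg_apply', MA_sub_apply', MA_single_apply', MA_single_apply',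
      if_neg (fun hh => fact_ne i i' (((xaeq _ _).mp hh).symm)), zero_sub, neg_neg]
    by_cases h : i = i'
    · subst h; rw [if_pos rfl, Pi.single_eq_same]
    · rw [if_neg (fun hh => h ((fact_inj i i').mp (neg_inj.mp ((xaeq _ _).mp hh)))),
        Pi.single_eq_of_ne (fun hh => h (Sum.inr.inj hh).symm)]

lemma Sfam_li [NeZero (2*n)] : LinearIndependent F (Sfam F n) := by
  apply LinearIndependent.of_comp (Rmap F n)
  rw [show (Rmap F n) ∘ (Sfam F n) = fun k => Pi.single k (1:F) from hcomp]
  have := (Pi.basisFun F (Fin (n-1) ⊕ Fin (n-1))).linearIndependent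
  rwa [show ⇑(Pi.basisFun F (Fin (n-1) ⊕ Fin (n-1))) = fun k => Pi.single k (1:F) from
    funext fun k => Pi.basisFun_apply F _ k] at this

lemma Efam_in_span (hn : 2 ≤ n) (h2 : (2:F) ≠ 0) (i : ZMod (2*n)) :
    Efam F n i ∈ Submodule.span F (Set.range (Sfam F n)) := by
  refine span_helper hn h2 _ (Efam F n) Efam_neg ?_ i
  intro j hj1 hj2
  have hco : ((⟨j-1, by omega⟩ : Fin (n-1)) : ℕ) + 1 = j := by
    show (j-1) + 1 = j
    omega
  have : Efam F n (j : ZMod (2*n)) = Sfam F n (Sum.inl ⟨j-1, by omega⟩) := by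
    rw [Sfam_inl, hco]
  rw [this]
  exact Submodule.subset_span ⟨_, rfl⟩

lemma Xfam_in_span (hn : 2 ≤ n) (h2 : (2:F) ≠ 0) (i : ZMod (2*n)) :
    Xfam F n i ∈ Submodule.span F (Set.range (Sfam F n)) := by
  refine span_helper hn h2 _ (Xfam F n) Xfam_neg ?_ i
  intro j hj1 hj2
  have hco : ((⟨j-1, by omega⟩ : Fin (n-1)) : ℕ) + 1 = j := by
    show (j-1) + 1 = j
    omega
  have : Xfam F n (j : ZMod (2*n)) = -(Sfam F n (Sum.inr ⟨j-1, by omega⟩)) := by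
    rw [Sfam_inr, hco, neg_neg]
  rw [this]
  exact Submodule.neg_mem _ (Submodule.subset_span ⟨_, rfl⟩)

lemma AC_le_span (hn : 2 ≤ n) (h2 : (2:F) ≠ 0) :
    antiCentralizer F (QuaternionGroup n) (bQ F n)
      ≤ Submodule.span F (Set.range (Sfam F n)) := by
  haveI : NeZero n := ⟨by omega⟩
  haveI : NeZero (2*n) := ⟨by omega⟩
  intro α hα
  rw [key h2 α (rel_a α hα) (rel_xa α hα)]
  refine Submodule.smul_mem _ _ (Submodule.add_mem _ ?_ ?_)
  · exact Submodule.sum_mem _ fun i _ => Submodule.smul_mem _ _ (Efam_in_span hn h2 i)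
  · exact Submodule.sum_mem _ fun i _ => Submodule.smul_mem _ _ (Xfam_in_span hn h2 i)

lemma Sfam_mem (k : Fin (n-1) ⊕ Fin (n-1)) :
    Sfam F n k ∈ antiCentralizer F (QuaternionGroup n) (bQ F n) := by
  rcases k with i | i
  · rw [Sfam_inl]; exact Efam_mem _
  · rw [Sfam_inr]; exact Submodule.neg_mem _ (Xfam_mem _)

lemma two_ne (hchar : ringChar F = 0 ∨ (Nat.Prime (ringChar F) ∧ Odd (ringChar F))) :
    (2:F) ≠ 0 := by
  intro h
  have h2 : ((2:ℕ):F) = 0 := by exact_mod_cast h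
  have hdvd : ringChar F ∣ 2 := (ringChar.spec F 2).mp h2
  rcases hchar with h0 | ⟨hp, hodd⟩
  · rw [h0] at hdvd
    exact absurd (zero_dvd_iff.mp hdvd) (by norm_num)
  · have hle := Nat.le_of_dvd (by norm_num) hdvd
    have hge := hp.two_le
    have : ringChar F = 2 := by omega
    rw [this] at hodd
    exact (Nat.not_odd_iff_even.mpr (by norm_num)) hodd

end AntiCB

/-- For a field `F` of characteristic `0` or an odd prime, the set
`{a^i - a^{-i}, (a^i - a^{-i}) b : 1 ≤ i ≤ n-1}` is an `F`-basis of the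
anti-centralizer `C̄(b)` in the dicyclic group algebra `F T_{4n}`. -/
theorem basis_antiCentralizer_b_quaternion (F : Type*) [Field F] (n : ℕ) (hn : 2 ≤ n)
    (hchar : ringChar F = 0 ∨ (Nat.Prime (ringChar F) ∧ Odd (ringChar F))) :
    ∃ B : Module.Basis (Fin (n - 1) ⊕ Fin (n - 1)) F
        (antiCentralizer F (QuaternionGroup n) (bQ F n)),
      (∀ i : Fin (n - 1),
          (B (Sum.inl i) : MonoidAlgebra F (QuaternionGroup n)) =
            aQ F n ((i : ℤ) + 1) - aQ F n (-((i : ℤ) + 1))) ∧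
      (∀ i : Fin (n - 1),
          (B (Sum.inr i) : MonoidAlgebra F (QuaternionGroup n)) =
            (aQ F n ((i : ℤ) + 1) - aQ F n (-((i : ℤ) + 1))) * bQ F n) := by
  haveI : NeZero n := ⟨by omega⟩
  haveI : NeZero (2*n) := ⟨by omega⟩
  have h2 : (2:F) ≠ 0 := AntiCB.two_ne hchar
  set p := antiCentralizer F (QuaternionGroup n) (bQ F n) with hp
  let v : Fin (n-1) ⊕ Fin (n-1) → p := fun k => ⟨AntiCB.Sfam F n k, AntiCB.Sfam_mem k⟩
  have hli : LinearIndependent F v := by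
    apply LinearIndependent.of_comp p.subtype
    have hc : (p.subtype : p →ₗ[F] MonoidAlgebra F (QuaternionGroup n)) ∘ v
        = AntiCB.Sfam F n := rfl
    rw [hc]
    exact AntiCB.Sfam_li
  have hsp : ⊤ ≤ Submodule.span F (Set.range v) := by
    rintro ⟨x, hx⟩ -
    have hx' : x ∈ Submodule.span F (Set.range (AntiCB.Sfam F n)) :=
      AntiCB.AC_le_span hn h2 hx
    have himg : Set.range (AntiCB.Sfam F n) = p.subtype '' (Set.range v) := by
      rw [← Set.range_comp]; rfl
    rw [himg, Submodule.span_image] at hx'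
    rcases Submodule.mem_map.mp hx' with ⟨y, hy, hyx⟩
    have : y = ⟨x, hx⟩ := Subtype.ext hyx
    rwa [this] at hy
  refine ⟨Module.Basis.mk hli hsp, fun i => ?_, fun i => ?_⟩
  · rw [Module.Basis.mk_apply]; rfl
  · rw [Module.Basis.mk_apply]; rfl
end

section
/- Let n ≥ 2 and let F be a field of characteristic 0 or of odd prime characteristic p. In the group algebra F T_{4n} of the dicyclic group T_{4n} = ⟨a, b | a^{2n} = 1, b² = aⁿ, b⁻¹ab = a⁻¹⟩, the set {aⁱ − a⁻ⁱ, a^{n+1}(aⁱ − a⁻ⁱ)b : i = 1, 2, ..., n−1} is an F-basis of the anti-centralizer C̄(a^{n+1}b) = {α ∈ F T_{4n} : α(a^{n+1}b) = −(a^{n+1}b)α}. -/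
open MonoidAlgebra

section Aux

open QuaternionGroup

variable {F : Type*} [Field F] {n : ℕ}

lemma xa_inv (m : ZMod (2*n)) : (xa m : QuaternionGroup n)⁻¹ = xa ((n : ZMod (2*n)) + m) := by
  apply inv_eq_of_mul_eq_one_right
  rw [xa_mul_xa, one_def]
  have h2 : ((2*n : ℕ) : ZMod (2*n)) = 0 := ZMod.natCast_self _
  push_cast at h2
  congr 1
  linear_combination h2

lemma beta_single :
    aQ F n ((n:ℤ)+1) * bQ F n
      = MonoidAlgebra.single (xa (-((n : ZMod (2*n))+1))) 1 := by
  unfold aQ bQ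
  rw [MonoidAlgebra.of_apply, MonoidAlgebra.of_apply, MonoidAlgebra.single_mul_single,
    mul_one, a_mul_xa]
  congr 2
  push_cast
  ring

lemma mem_anti_iff {G : Type*} [Group G] (x : G) (α : MonoidAlgebra F G) :
    α ∈ antiCentralizer F G (MonoidAlgebra.single x 1) ↔
      ∀ y : G, α.coeff (y * x⁻¹) = - α.coeff (x⁻¹ * y) := by
  constructor
  · intro h y
    have := congrArg (fun f : MonoidAlgebra F G => f.coeff y) h
    rwa [MonoidAlgebra.mul_single_apply, MonoidAlgebra.coeff_neg, Finsupp.neg_apply,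
      MonoidAlgebra.single_mul_apply, one_mul, mul_one] at this
  · intro h
    show α * MonoidAlgebra.single x 1 = -(MonoidAlgebra.single x 1 * α)
    apply MonoidAlgebra.ext
    apply Finsupp.ext
    intro y
    rw [MonoidAlgebra.mul_single_apply, MonoidAlgebra.coeff_neg, Finsupp.neg_apply,
      MonoidAlgebra.single_mul_apply, one_mul, mul_one]
    exact h y

lemma relA (α : MonoidAlgebra F (QuaternionGroup n))
    (hα : α ∈ antiCentralizer F (QuaternionGroup n) (aQ F n ((n:ℤ)+1) * bQ F n))
    (i : ZMod (2*n)) : α.coeff (a (-i)) = - α.coeff (a i) := by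
  rw [beta_single, mem_anti_iff] at hα
  have := hα (xa ((n : ZMod (2*n)) - 1 + i))
  rw [xa_inv] at this
  have e1 : (n : ZMod (2*n)) + -((n : ZMod (2*n))+1) = -1 := by ring
  rw [e1] at this
  rw [xa_mul_xa, xa_mul_xa] at this
  have h2 : ((2*n : ℕ) : ZMod (2*n)) = 0 := ZMod.natCast_self _
  push_cast at h2
  have e2 : (n : ZMod (2*n)) + -1 - ((n : ZMod (2*n)) - 1 + i) = -i := by ring
  have e3 : (n : ZMod (2*n)) + ((n : ZMod (2*n)) - 1 + i) - -1 = i := by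
    linear_combination h2
  rw [e2, e3] at this
  exact this

lemma relX (α : MonoidAlgebra F (QuaternionGroup n))
    (hα : α ∈ antiCentralizer F (QuaternionGroup n) (aQ F n ((n:ℤ)+1) * bQ F n))
    (i : ZMod (2*n)) : α.coeff (xa (-2 - i)) = - α.coeff (xa i) := by
  rw [beta_single, mem_anti_iff] at hα
  have := hα (a (i + 1))
  rw [xa_inv] at this
  have e1 : (n : ZMod (2*n)) + -((n : ZMod (2*n))+1) = -1 := by ring
  rw [e1] at this
  rw [a_mul_xa, xa_mul_a] at this
  have e2 : (-1 : ZMod (2*n)) - (i + 1) = -2 - i := by ring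
  have e3 : (-1 : ZMod (2*n)) + (i + 1) = i := by ring
  rw [e2, e3] at this
  exact this

/-- the first family of vectors -/
noncomputable def vA (F : Type*) [Field F] (n : ℕ) (i : Fin (n-1)) :
    MonoidAlgebra F (QuaternionGroup n) :=
  aQ F n ((i : ℤ) + 1) - aQ F n (-((i : ℤ) + 1))

/-- the second family of vectors -/
noncomputable def vX (F : Type*) [Field F] (n : ℕ) (i : Fin (n-1)) :
    MonoidAlgebra F (QuaternionGroup n) :=
  aQ F n ((n : ℤ) + 1) * (aQ F n ((i : ℤ) + 1) - aQ F n (-((i : ℤ) + 1))) * bQ F n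

lemma vA_single (i : Fin (n-1)) :
    vA F n i = MonoidAlgebra.single (a (((i : ℕ) + 1 : ℕ) : ZMod (2*n))) 1
      - MonoidAlgebra.single (a (-(((i : ℕ) + 1 : ℕ) : ZMod (2*n)))) 1 := by
  unfold vA aQ
  rw [MonoidAlgebra.of_apply, MonoidAlgebra.of_apply]
  congr 3 <;> push_cast <;> ring

lemma vX_single (hn : 2 ≤ n) (i : Fin (n-1)) :
    vX F n i = MonoidAlgebra.single (xa ((n - 2 - (i : ℕ) : ℕ) : ZMod (2*n))) 1
      - MonoidAlgebra.single (xa ((n + (i : ℕ) : ℕ) : ZMod (2*n))) 1 := by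
  have hi : 2 + (i : ℕ) ≤ n := by have := i.2; omega
  have h2 : ((2*n : ℕ) : ZMod (2*n)) = 0 := ZMod.natCast_self _
  push_cast at h2
  have hs : ((n - 2 - (i : ℕ) : ℕ) : ZMod (2*n)) = (n : ZMod (2*n)) - 2 - (i : ℕ) := by
    rw [Nat.sub_sub, Nat.cast_sub hi]
    push_cast
    ring
  have e1 : vX F n i = aQ F n ((n : ℤ) + 1) * vA F n i * bQ F n := rfl
  rw [e1, vA_single]
  unfold aQ bQ
  rw [MonoidAlgebra.of_apply, MonoidAlgebra.of_apply, mul_sub, sub_mul,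
    MonoidAlgebra.single_mul_single, MonoidAlgebra.single_mul_single,
    MonoidAlgebra.single_mul_single, MonoidAlgebra.single_mul_single]
  simp only [a_mul_a, a_mul_xa, mul_one]
  congr 3
  · rw [hs]
    push_cast
    linear_combination (-1) * h2
  · push_cast
    linear_combination (-1) * h2

section Vals
variable (hn : 2 ≤ n)
include hn

lemma neZero2n : NeZero (2*n) := ⟨by omega⟩

lemma valA (i : Fin (n-1)) :
    haveI := neZero2n (n := n) hn
    (((i : ℕ) + 1 : ℕ) : ZMod (2*n)).val = (i : ℕ) + 1 := by
  haveI := neZero2n (n := n) hn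
  exact ZMod.val_cast_of_lt (by have := i.2; omega)

lemma valnegA (i : Fin (n-1)) :
    haveI := neZero2n (n := n) hn
    (-(((i : ℕ) + 1 : ℕ) : ZMod (2*n))).val = 2*n - ((i : ℕ) + 1) := by
  haveI := neZero2n (n := n) hn
  rw [ZMod.neg_val, if_neg, valA hn]
  intro h
  have := congrArg ZMod.val h
  rw [valA hn, ZMod.val_zero] at this
  omega

lemma valX1 (i : Fin (n-1)) :
    haveI := neZero2n (n := n) hn
    ((n - 2 - (i : ℕ) : ℕ) : ZMod (2*n)).val = n - 2 - (i : ℕ) := by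
  haveI := neZero2n (n := n) hn
  exact ZMod.val_cast_of_lt (by omega)

lemma valX2 (i : Fin (n-1)) :
    haveI := neZero2n (n := n) hn
    ((n + (i : ℕ) : ℕ) : ZMod (2*n)).val = n + (i : ℕ) := by
  haveI := neZero2n (n := n) hn
  exact ZMod.val_cast_of_lt (by have := i.2; omega)

end Vals

/-- coordinate map -/
noncomputable def Emap (F : Type*) [Field F] (n : ℕ) :
    MonoidAlgebra F (QuaternionGroup n) →ₗ[F] ((Fin (n-1) ⊕ Fin (n-1)) → F) where
  toFun α := Sum.elim (fun i => α.coeff (a (((i : ℕ) + 1 : ℕ) : ZMod (2*n))))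
    (fun i => α.coeff (xa ((n - 2 - (i : ℕ) : ℕ) : ZMod (2*n))))
  map_add' x y := by
    funext j
    cases j <;> rfl
  map_smul' c x := by
    funext j
    cases j <;> rfl

lemma castEq (hn : 2 ≤ n) {x y : ℕ} (hx : x < 2*n) (hy : y < 2*n) :
    ((x : ZMod (2*n)) = (y : ZMod (2*n))) ↔ x = y := by
  haveI := neZero2n (n := n) hn
  constructor
  · intro h
    have := congrArg ZMod.val h
    rwa [ZMod.val_cast_of_lt hx, ZMod.val_cast_of_lt hy] at this
  · intro h; rw [h]

lemma negCast {x : ℕ} (hx : x ≤ 2*n) :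
    -((x : ℕ) : ZMod (2*n)) = ((2*n - x : ℕ) : ZMod (2*n)) := by
  have h : ((x : ℕ) : ZMod (2*n)) + ((2*n - x : ℕ) : ZMod (2*n)) = 0 := by
    rw [← Nat.cast_add, show x + (2*n - x) = 2*n from by omega]
    exact ZMod.natCast_self _
  exact neg_eq_of_add_eq_zero_right h

lemma Emap_vA (hn : 2 ≤ n) (j : Fin (n-1)) :
    Emap F n (vA F n j) = Pi.single (Sum.inl j) 1 := by
  have hj := j.2
  funext g
  rcases g with i | i
  · have hi := i.2
    show (vA F n j).coeff (a (((i : ℕ)+1 : ℕ) : ZMod (2*n))) = _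
    rw [vA_single, negCast (by omega), MonoidAlgebra.coeff_sub, Finsupp.sub_apply, MonoidAlgebra.coeff_single, MonoidAlgebra.coeff_single, Finsupp.single_apply,
      Finsupp.single_apply, Pi.single_apply]
    have h2 : ¬ ((a ((2*n - ((j:ℕ)+1) : ℕ) : ZMod (2*n)) : QuaternionGroup n)
        = a (((i:ℕ)+1 : ℕ) : ZMod (2*n))) := by
      intro h
      rw [a.injEq, castEq hn (by omega) (by omega)] at h
      omega
    rw [if_neg h2, sub_zero]
    by_cases h : i = j
    · subst h
      rw [if_pos rfl, if_pos rfl]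
    · rw [if_neg (by
        intro hh
        rw [a.injEq, castEq hn (by omega) (by omega)] at hh
        exact h (Fin.ext (by omega))), if_neg (by
        intro hh
        exact h (Sum.inl.injEq .. ▸ hh))]
  · have hi := i.2
    show (vA F n j).coeff (xa ((n - 2 - (i : ℕ) : ℕ) : ZMod (2*n))) = _
    rw [vA_single, MonoidAlgebra.coeff_sub, Finsupp.sub_apply, MonoidAlgebra.coeff_single, MonoidAlgebra.coeff_single, Finsupp.single_apply, Finsupp.single_apply,
      if_neg (by simp), if_neg (by simp), Pi.single_apply, if_neg (by simp), sub_zero]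

lemma Emap_vX (hn : 2 ≤ n) (j : Fin (n-1)) :
    Emap F n (vX F n j) = Pi.single (Sum.inr j) 1 := by
  have hj := j.2
  funext g
  rcases g with i | i
  · show (vX F n j).coeff (a (((i : ℕ)+1 : ℕ) : ZMod (2*n))) = _
    rw [vX_single hn, MonoidAlgebra.coeff_sub, Finsupp.sub_apply, MonoidAlgebra.coeff_single, MonoidAlgebra.coeff_single, Finsupp.single_apply, Finsupp.single_apply,
      if_neg (by simp), if_neg (by simp), Pi.single_apply, if_neg (by simp), sub_zero]
  · have hi := i.2
    show (vX F n j).coeff (xa ((n - 2 - (i : ℕ) : ℕ) : ZMod (2*n))) = _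
    rw [vX_single hn, MonoidAlgebra.coeff_sub, Finsupp.sub_apply, MonoidAlgebra.coeff_single, MonoidAlgebra.coeff_single, Finsupp.single_apply, Finsupp.single_apply,
      Pi.single_apply]
    have h2 : ¬ ((xa ((n + (j:ℕ) : ℕ) : ZMod (2*n)) : QuaternionGroup n)
        = xa ((n - 2 - (i:ℕ) : ℕ) : ZMod (2*n))) := by
      intro h
      rw [xa.injEq, castEq hn (by omega) (by omega)] at h
      omega
    rw [if_neg h2, sub_zero]
    by_cases h : i = j
    · subst h
      rw [if_pos rfl, if_pos rfl]
    · rw [if_neg (by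
        intro hh
        rw [xa.injEq, castEq hn (by omega) (by omega)] at hh
        exact h (Fin.ext (by omega))), if_neg (by
        intro hh
        exact h (Sum.inr.injEq .. ▸ hh))]

lemma mem_vA (j : Fin (n-1)) :
    vA F n j ∈ antiCentralizer F (QuaternionGroup n) (aQ F n ((n:ℤ)+1) * bQ F n) := by
  show vA F n j * _ = -(_ * vA F n j)
  rw [beta_single, vA_single, sub_mul, mul_sub, MonoidAlgebra.single_mul_single,
    MonoidAlgebra.single_mul_single, MonoidAlgebra.single_mul_single,
    MonoidAlgebra.single_mul_single, a_mul_xa, a_mul_xa, xa_mul_a, xa_mul_a, neg_sub,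
    mul_one]
  congr 3 <;> ring

lemma mem_beta_mul {G : Type*} [Group G] {β α : MonoidAlgebra F G}
    (h : α ∈ antiCentralizer F G β) : β * α ∈ antiCentralizer F G β := by
  have h' : α * β = -(β * α) := h
  show (β * α) * β = -(β * (β * α))
  rw [mul_assoc, h', mul_neg]

lemma beta_mul_vA (hn : 2 ≤ n) (j : Fin (n-1)) :
    (aQ F n ((n:ℤ)+1) * bQ F n) * vA F n j = -(vX F n j) := by
  have hj := j.2
  have hi : 2 + (j : ℕ) ≤ n := by omega
  have h2 : ((2*n : ℕ) : ZMod (2*n)) = 0 := ZMod.natCast_self _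
  push_cast at h2
  have hs : ((n - 2 - (j : ℕ) : ℕ) : ZMod (2*n)) = (n : ZMod (2*n)) - 2 - (j : ℕ) := by
    rw [Nat.sub_sub, Nat.cast_sub hi]
    push_cast
    ring
  rw [beta_single, vA_single, vX_single hn, mul_sub, MonoidAlgebra.single_mul_single,
    MonoidAlgebra.single_mul_single, xa_mul_a, xa_mul_a, neg_sub, mul_one]
  congr 3
  · push_cast
    linear_combination -h2
  · rw [hs]
    push_cast
    linear_combination -h2

lemma mem_vX (hn : 2 ≤ n) (j : Fin (n-1)) :
    vX F n j ∈ antiCentralizer F (QuaternionGroup n) (aQ F n ((n:ℤ)+1) * bQ F n) := by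
  have h := mem_beta_mul (mem_vA (F := F) (n := n) j)
  rw [beta_mul_vA hn] at h
  simpa using (antiCentralizer F (QuaternionGroup n) _).neg_mem h

lemma inj_aux (hn : 2 ≤ n) (h2F : (2 : F) ≠ 0) (α : MonoidAlgebra F (QuaternionGroup n))
    (hα : α ∈ antiCentralizer F (QuaternionGroup n) (aQ F n ((n:ℤ)+1) * bQ F n))
    (hE : Emap F n α = 0) : α = 0 := by
  haveI := neZero2n (n := n) hn
  have h2 : ((2*n : ℕ) : ZMod (2*n)) = 0 := ZMod.natCast_self _
  have h2' := h2
  push_cast at h2'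
  have half : ∀ x : F, x = -x → x = 0 := by
    intro x hx
    have : (2:F) * x = 0 := by linear_combination hx
    exact (mul_eq_zero.mp this).resolve_left h2F
  have hz1 : ∀ i : Fin (n-1), α.coeff (a (((i:ℕ)+1 : ℕ) : ZMod (2*n))) = 0 :=
    fun i => congrFun hE (Sum.inl i)
  have hz2 : ∀ i : Fin (n-1), α.coeff (xa ((n - 2 - (i:ℕ) : ℕ) : ZMod (2*n))) = 0 :=
    fun i => congrFun hE (Sum.inr i)
  -- a-part, small exponents
  have aSmall : ∀ k : ℕ, k ≤ n → α.coeff (a (k : ZMod (2*n))) = 0 := by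
    intro k hk
    rcases Nat.eq_zero_or_pos k with h0 | h0
    · subst h0
      have h := relA α hα 0
      rw [neg_zero] at h
      rw [Nat.cast_zero]
      exact half _ h
    · rcases eq_or_lt_of_le hk with hkn | hkn
      · have h := relA α hα (k : ZMod (2*n))
        have e : -((k:ℕ) : ZMod (2*n)) = ((k:ℕ) : ZMod (2*n)) := by
          rw [hkn]
          linear_combination -h2'
        rw [e] at h
        exact half _ h
      · have ek : k = (k-1)+1 := by omega
        rw [show ((k:ℕ) : ZMod (2*n)) = (((k-1)+1 : ℕ) : ZMod (2*n)) from by rw [← ek]]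
        exact hz1 ⟨k-1, by omega⟩
  have aZero : ∀ k : ℕ, k < 2*n → α.coeff (a (k : ZMod (2*n))) = 0 := by
    intro k hk
    by_cases hkn : k ≤ n
    · exact aSmall k hkn
    · have h := relA α hα ((2*n - k : ℕ) : ZMod (2*n))
      rw [negCast (by omega), show 2*n - (2*n - k) = k from by omega] at h
      rw [h, aSmall (2*n - k) (by omega), neg_zero]
  -- xa-part
  have xaSmall : ∀ k : ℕ, k ≤ n-2 → α.coeff (xa (k : ZMod (2*n))) = 0 := by
    intro k hk
    rw [show ((k:ℕ) : ZMod (2*n)) = ((n - 2 - ((n-2-k : ℕ)) : ℕ) : ZMod (2*n)) from by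
      rw [show n - 2 - (n-2-k) = k from by omega]]
    exact hz2 ⟨n-2-k, by omega⟩
  have xaZero : ∀ k : ℕ, k < 2*n → α.coeff (xa (k : ZMod (2*n))) = 0 := by
    intro k hk
    by_cases hsmall : k ≤ n-2
    · exact xaSmall k hsmall
    · by_cases hf1 : k = n-1
      · subst hf1
        have h := relX α hα (((n-1 : ℕ)) : ZMod (2*n))
        have e : (-2 - ((n-1 : ℕ) : ZMod (2*n))) = ((n-1 : ℕ) : ZMod (2*n)) := by
          push_cast [Nat.cast_sub (show 1 ≤ n by omega)]
          linear_combination -h2'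
        rw [e] at h
        exact half _ h
      · by_cases hf2 : k = 2*n-1
        · subst hf2
          have h := relX α hα (((2*n-1 : ℕ)) : ZMod (2*n))
          have e : (-2 - ((2*n-1 : ℕ) : ZMod (2*n))) = ((2*n-1 : ℕ) : ZMod (2*n)) := by
            push_cast [Nat.cast_sub (show 1 ≤ 2*n by omega)]
            linear_combination -2*h2'
          rw [e] at h
          exact half _ h
        · -- n ≤ k ≤ 2n-2
          have hkb : n ≤ k ∧ k ≤ 2*n-2 := by omega
          have h := relX α hα (((2*n-2-k : ℕ)) : ZMod (2*n))
          have hsum : ((k + (2*n-2-k) + 2 : ℕ) : ZMod (2*n)) = 0 := by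
            rw [show k + (2*n-2-k) + 2 = 2*n from by omega]
            exact ZMod.natCast_self _
          push_cast at hsum
          rw [show (-2 - ((2*n-2-k : ℕ) : ZMod (2*n))) = ((k : ℕ) : ZMod (2*n)) from by
            linear_combination -hsum] at h
          rw [h, xaSmall (2*n-2-k) (by omega), neg_zero]
  apply MonoidAlgebra.ext
  apply Finsupp.ext
  intro g
  show α.coeff g = 0
  rcases g with i | i
  · rw [show i = ((i.val : ℕ) : ZMod (2*n)) from (ZMod.natCast_rightInverse i).symm]
    exact aZero i.val (ZMod.val_lt i)
  · rw [show i = ((i.val : ℕ) : ZMod (2*n)) from (ZMod.natCast_rightInverse i).symm]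
    exact xaZero i.val (ZMod.val_lt i)

lemma sum_single_eval {ι : Type*} [Fintype ι] [DecidableEq ι] (c : ι → F) :
    (∑ i, c i • (Pi.single i 1 : ι → F)) = c := by
  funext j
  rw [Finset.sum_apply]
  simp [Pi.single_apply]


end Aux

/-- For a field `F` of characteristic `0` or an odd prime, the set
`{a^i - a^{-i}, a^{n+1} (a^i - a^{-i}) b : 1 ≤ i ≤ n-1}` is an `F`-basis of the
anti-centralizer `C̄(a^{n+1} b)` in the dicyclic group algebra `F T_{4n}`. -/
theorem basis_antiCentralizer_anb_quaternion (F : Type*) [Field F] (n : ℕ) (hn : 2 ≤ n)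
    (hchar : ringChar F = 0 ∨ (Nat.Prime (ringChar F) ∧ Odd (ringChar F))) :
    ∃ B : Module.Basis (Fin (n - 1) ⊕ Fin (n - 1)) F
        (antiCentralizer F (QuaternionGroup n) (aQ F n ((n : ℤ) + 1) * bQ F n)),
      (∀ i : Fin (n - 1),
          (B (Sum.inl i) : MonoidAlgebra F (QuaternionGroup n)) =
            aQ F n ((i : ℤ) + 1) - aQ F n (-((i : ℤ) + 1))) ∧
      (∀ i : Fin (n - 1),
          (B (Sum.inr i) : MonoidAlgebra F (QuaternionGroup n)) =
            aQ F n ((n : ℤ) + 1) *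
              (aQ F n ((i : ℤ) + 1) - aQ F n (-((i : ℤ) + 1))) * bQ F n) := by
  have h2F : (2 : F) ≠ 0 := by
    apply Ring.two_ne_zero
    rcases hchar with h | ⟨hp, hodd⟩
    · rw [h]; norm_num
    · intro he
      rw [he] at hodd
      exact (Nat.not_odd_iff_even.mpr even_two) hodd
  set S := antiCentralizer F (QuaternionGroup n) (aQ F n ((n : ℤ) + 1) * bQ F n) with hS
  set v : (Fin (n-1) ⊕ Fin (n-1)) → MonoidAlgebra F (QuaternionGroup n) :=
    Sum.elim (vA F n) (vX F n) with hv
  have memv : ∀ j, v j ∈ S := by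
    rintro (j | j)
    · exact mem_vA j
    · exact mem_vX hn j
  have Emap_v : ∀ j, Emap F n (v j) = Pi.single j 1 := by
    rintro (j | j)
    · exact Emap_vA hn j
    · exact Emap_vX hn j
  set v' : (Fin (n-1) ⊕ Fin (n-1)) → S := fun j => ⟨v j, memv j⟩ with hv'
  have keysum : ∀ c : (Fin (n-1) ⊕ Fin (n-1)) → F,
      Emap F n (∑ j, c j • v j) = c := by
    intro c
    rw [map_sum]
    simp only [map_smul, Emap_v]
    exact sum_single_eval c
  have hindep : LinearIndependent F v' := by
    rw [Fintype.linearIndependent_iff]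
    intro c hc
    have hc' : (∑ j, c j • v j) = 0 := by
      have := congrArg (Subtype.val) hc
      rwa [Submodule.coe_sum] at this
      -- may need coe_smul
    have := congrFun (keysum c ▸ congrArg (Emap F n) hc') 
    intro i
    have h0 := keysum c
    rw [hc', map_zero] at h0
    exact (congrFun h0.symm i)
  have hspan : ⊤ ≤ Submodule.span F (Set.range v') := by
    intro x _
    have hdiff : (x : MonoidAlgebra F (QuaternionGroup n))
        - ∑ j, (Emap F n (x : MonoidAlgebra F (QuaternionGroup n))) j • v j ∈ S :=
      S.sub_mem x.2 (Submodule.sum_mem _ fun j _ => S.smul_mem _ (memv j))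
    have hEzero : Emap F n ((x : MonoidAlgebra F (QuaternionGroup n))
        - ∑ j, (Emap F n (x : MonoidAlgebra F (QuaternionGroup n))) j • v j) = 0 := by
      rw [map_sub, keysum, sub_self]
    have hxeq : (x : MonoidAlgebra F (QuaternionGroup n))
        = ∑ j, (Emap F n (x : MonoidAlgebra F (QuaternionGroup n))) j • v j :=
      sub_eq_zero.mp (inj_aux hn h2F _ hdiff hEzero)
    have : x = ∑ j, (Emap F n (x : MonoidAlgebra F (QuaternionGroup n))) j • v' j := by
      apply Subtype.ext
      rw [Submodule.coe_sum]
      exact hxeq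
    rw [this]
    exact Submodule.sum_mem _ fun j _ =>
      Submodule.smul_mem _ _ (Submodule.subset_span ⟨j, rfl⟩)
  refine ⟨Module.Basis.mk hindep hspan, fun i => ?_, fun i => ?_⟩
  · rw [Module.Basis.mk_apply]
    rfl
  · rw [Module.Basis.mk_apply]
    rfl
end

section
/- Let n ≥ 2 and let F be a field that is an algebraic extension of its prime field, of characteristic 0 or of odd prime characteristic p with p ∤ n. Then every derivation of the dicyclic group algebra F T_{4n} is inner: for every additive map d : F T_{4n} → F T_{4n} satisfying d(xy) = d(x)y + x d(y) for all x, y, there exists β ∈ F T_{4n} such that d(α) = αβ − βα for all α ∈ F T_{4n}. -/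
open MonoidAlgebra

theorem myDerivOne {A : Type*} [Ring A] (d : A →+ A)
    (hd : ∀ x y : A, d (x * y) = d x * y + x * d y) : d 1 = 0 := by
  have h := hd 1 1
  simp only [one_mul, mul_one] at h
  have : d 1 + d 1 = d 1 + 0 := by rw [add_zero]; exact h.symm
  exact (add_left_cancel this)

theorem myDerivPow {F A : Type*} [Field F] [Ring A] [Algebra F A]
    (d : A →+ A) (hd : ∀ x y : A, d (x * y) = d x * y + x * d y) (x : F) (i : ℕ) :
    d (algebraMap F A (x ^ i)) = (i : A) * (algebraMap F A x) ^ (i - 1) * d (algebraMap F A x) := by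
  set u := algebraMap F A x with hu
  set v := d (algebraMap F A x) with hv
  induction i with
  | zero => simp [myDerivOne d hd]
  | succ i ih =>
    rw [pow_succ, map_mul, hd, ih, map_pow]
    rcases Nat.eq_zero_or_pos i with hi | hi
    · subst hi; simp [hv]
    · have h1 : u ^ (i - 1) * u = u ^ i := by
        rw [← pow_succ, Nat.sub_add_cancel hi]
      have hc : v * u = u * v := (Algebra.commutes x v).symm
      rw [Nat.cast_add, Nat.cast_one, Nat.add_sub_cancel]
      calc (i:A) * u ^ (i-1) * v * u + u ^ i * v
          = (i:A) * u ^ (i-1) * (v * u) + u ^ i * v := by noncomm_ring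
        _ = (i:A) * (u ^ (i-1) * u) * v + u ^ i * v := by rw [hc]; noncomm_ring
        _ = ((i:A) + 1) * u ^ i * v := by rw [h1]; noncomm_ring

theorem myDerivEval {F A : Type*} [Field F] [Ring A] [Algebra F A]
    (d : A →+ A) (hd : ∀ x y : A, d (x * y) = d x * y + x * d y) (x : F)
    (q : Polynomial F) (hq : ∀ i, d (algebraMap F A (q.coeff i)) = 0) :
    d (algebraMap F A (q.eval x))
      = algebraMap F A (q.derivative.eval x) * d (algebraMap F A x) := by
  rw [Polynomial.eval_eq_sum, Polynomial.derivative_eval, Polynomial.sum_def, Polynomial.sum_def,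
    map_sum, map_sum, map_sum, Finset.sum_mul]
  refine Finset.sum_congr rfl fun i _ => ?_
  rw [map_mul, hd, hq i, zero_mul, zero_add, myDerivPow d hd, map_mul, map_mul, map_natCast]
  rw [map_pow]
  noncomm_ring

/-- Any additive derivation of an `F`-algebra vanishes on (the image of) `F`, provided `F`
is a separable algebraic extension of its prime field. -/
theorem myDerivField {F A : Type*} [Field F] [Ring A] [Algebra F A]
    [Algebra.IsAlgebraic (⊥ : Subfield F) F] [PerfectField (⊥ : Subfield F)]
    (d : A →+ A) (hd : ∀ x y : A, d (x * y) = d x * y + x * d y) (x : F) :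
    d (algebraMap F A x) = 0 := by
  set σ := algebraMap F A with hσ
  -- the set where d ∘ σ vanishes is a subfield
  set K : Subfield F :=
    { carrier := {a | d (σ a) = 0}
      mul_mem' := fun {a b} ha hb => by
        simp only [Set.mem_setOf_eq] at *
        rw [map_mul, hd, ha, hb, zero_mul, mul_zero, add_zero]
      one_mem' := by simpa using myDerivOne d hd
      add_mem' := fun {a b} ha hb => by
        simp only [Set.mem_setOf_eq] at *
        rw [map_add, map_add, ha, hb, add_zero]
      zero_mem' := by simp
      neg_mem' := fun {a} ha => by
        simp only [Set.mem_setOf_eq] at *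
        rw [map_neg, map_neg, ha, neg_zero]
      inv_mem' := fun a ha => by
        simp only [Set.mem_setOf_eq] at *
        rcases eq_or_ne a 0 with rfl | h0
        · simpa using ha
        · have h1 : d (σ (a * a⁻¹)) = 0 := by
            rw [mul_inv_cancel₀ h0, map_one]; simpa using myDerivOne d hd
          rw [map_mul, hd, ha, zero_mul, zero_add] at h1
          have := congrArg (fun z => σ a⁻¹ * z) h1
          simpa [← mul_assoc, ← map_mul, inv_mul_cancel₀ h0] using this } with hK
  have hbot : ∀ a ∈ (⊥ : Subfield F), d (σ a) = 0 := fun a ha =>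
    (bot_le : (⊥ : Subfield F) ≤ K) ha
  -- minimal polynomial of `x` over the prime field, and its separability
  set m := minpoly (⊥ : Subfield F) x with hm
  have hm0 : Polynomial.aeval x m = 0 := minpoly.aeval _ x
  have sep : m.Separable := Algebra.IsSeparable.isSeparable _ x
  obtain ⟨a, b, hab⟩ := sep
  have hab' : Polynomial.aeval x b * Polynomial.aeval x m.derivative = 1 := by
    have := congrArg (Polynomial.aeval x) hab
    simpa [hm0] using this
  set ι := algebraMap (⊥ : Subfield F) F with hι
  set q := m.map ι with hq
  have hqe : q.eval x = Polynomial.aeval x m := by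
    rw [hq, Polynomial.eval_map, Polynomial.aeval_def]
  have hqd : q.derivative.eval x = Polynomial.aeval x m.derivative := by
    rw [hq, Polynomial.derivative_map, Polynomial.eval_map, Polynomial.aeval_def]
  have hcoeff : ∀ i, d (σ (q.coeff i)) = 0 := by
    intro i
    rw [hq, Polynomial.coeff_map]
    exact hbot _ (m.coeff i).2
  have key := myDerivEval d hd x q hcoeff
  rw [hqe, hm0, map_zero, map_zero, hqd] at key
  have key2 := congrArg (fun z => σ (Polynomial.aeval x b) * z) key.symm
  simp only [hσ, mul_zero, ← mul_assoc, ← map_mul, hab', map_one, one_mul] at key2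
  exact key2

/-- Averaging argument: over a field in which the order of the finite group `G` is invertible,
every `F`-linear derivation of the group algebra `F[G]` is inner. -/
theorem myInner {F G : Type*} [Field F] [Group G] [Fintype G]
    (hcard : (Fintype.card G : F) ≠ 0)
    (d : MonoidAlgebra F G →+ MonoidAlgebra F G)
    (hd : ∀ x y : MonoidAlgebra F G, d (x * y) = d x * y + x * d y)
    (hlin : ∀ (r : F) (x : MonoidAlgebra F G), d (r • x) = r • d x) :
    ∃ β : MonoidAlgebra F G, ∀ α : MonoidAlgebra F G, d α = α * β - β * α := by
  classical
  set e : G → MonoidAlgebra F G := fun g => of F G g with he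
  have hmul : ∀ g h : G, e g * e h = e (g * h) := fun g h => (map_mul (of F G) g h).symm
  have hone : e 1 = 1 := map_one (of F G)
  have hinv : ∀ g : G, e g * e g⁻¹ = 1 := fun g => by
    rw [hmul, mul_inv_cancel, hone]
  have hinv' : ∀ g : G, e g⁻¹ * e g = 1 := fun g => by
    rw [hmul, inv_mul_cancel, hone]
  set S : MonoidAlgebra F G := ∑ g : G, d (e g) * e g⁻¹ with hS
  have hstep : ∀ g : G, S = (Fintype.card G : F) • (d (e g) * e g⁻¹) + e g * S * e g⁻¹ := by
    intro g
    have hre : S = ∑ h : G, d (e (g * h)) * e (g * h)⁻¹ := by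
      rw [hS]
      exact (Fintype.sum_equiv (Equiv.mulLeft g) _ _ (fun h => rfl)).symm
    have hterm : ∀ h : G, d (e (g * h)) * e (g * h)⁻¹
        = d (e g) * e g⁻¹ + e g * (d (e h) * e h⁻¹) * e g⁻¹ := by
      intro h
      rw [← hmul, hd, mul_inv_rev, ← hmul, add_mul]
      congr 1
      · rw [mul_assoc, ← mul_assoc (e h), hinv, one_mul]
      · noncomm_ring
    calc S = ∑ h : G, d (e (g * h)) * e (g * h)⁻¹ := hre
      _ = ∑ h : G, (d (e g) * e g⁻¹ + e g * (d (e h) * e h⁻¹) * e g⁻¹) :=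
          Finset.sum_congr rfl fun h _ => hterm h
      _ = (Fintype.card G : F) • (d (e g) * e g⁻¹) + e g * S * e g⁻¹ := by
          rw [Finset.sum_add_distrib, Finset.sum_const, Finset.card_univ,
            ← Nat.cast_smul_eq_nsmul F, ← Finset.sum_mul, ← Finset.mul_sum]
  set c : F := (Fintype.card G : F)⁻¹ with hc
  set β : MonoidAlgebra F G := -(c • S) with hβ
  refine ⟨β, ?_⟩
  have hg : ∀ g : G, d (e g) = e g * β - β * e g := by
    intro g
    have h1 := congrArg (fun z => z * e g) (hstep g)
    rw [add_mul, smul_mul_assoc, mul_assoc _ (e g⁻¹) (e g), hinv', mul_one,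
      mul_assoc _ (e g⁻¹) (e g), hinv', mul_one] at h1
    have h2 : (Fintype.card G : F) • d (e g) = S * e g - e g * S := by
      rw [h1]; abel
    have h3 : d (e g) = c • (S * e g - e g * S) := by
      rw [← h2, smul_smul, hc, inv_mul_cancel₀ hcard, one_smul]
    rw [h3, hβ, smul_sub, neg_mul, mul_neg, sub_neg_eq_add, smul_mul_assoc, mul_smul_comm]
    abel
  intro α
  induction α using MonoidAlgebra.induction_on with
  | of g => exact hg g
  | add f g hf hg' => rw [map_add, hf, hg', add_mul, mul_add]; abel
  | smul r f hf => rw [hlin, hf, smul_sub, smul_mul_assoc, mul_smul_comm]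

/-- If `F` is an algebraic extension of its prime field (the bottom subfield of `F`)
of characteristic `0` or of odd prime characteristic `p` with `p ∤ n`, then every
derivation of the dicyclic group algebra `F T_{4n}` is inner. -/
theorem derivations_quaternion_inner (F : Type*) [Field F]
    [Algebra.IsAlgebraic (⊥ : Subfield F) F] (n : ℕ) (hn : 2 ≤ n)
    (hchar : ringChar F = 0 ∨
      (Nat.Prime (ringChar F) ∧ Odd (ringChar F) ∧ ¬ ringChar F ∣ n))
    (d : MonoidAlgebra F (QuaternionGroup n) →+ MonoidAlgebra F (QuaternionGroup n))
    (hd : ∀ x y : MonoidAlgebra F (QuaternionGroup n), d (x * y) = d x * y + x * d y) :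
    ∃ β : MonoidAlgebra F (QuaternionGroup n),
      ∀ α : MonoidAlgebra F (QuaternionGroup n), d α = α * β - β * α := by
  haveI : NeZero n := ⟨by omega⟩
  -- the prime field is perfect, and the order of the group is invertible in `F`
  have hmain : PerfectField (⊥ : Subfield F) ∧ (Fintype.card (QuaternionGroup n) : F) ≠ 0 := by
    rw [QuaternionGroup.card]
    rcases hchar with h0 | ⟨hp, hodd, hdvd⟩
    · haveI : CharP F 0 := by rw [← h0]; exact ringChar.charP F
      haveI : CharZero F := CharP.charP_to_charZero F
      haveI : CharZero (⊥ : Subfield F) := by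
        constructor
        intro a b h
        have := congrArg (Subfield.subtype ⊥) h
        rw [map_natCast, map_natCast] at this
        exact Nat.cast_injective this
      refine ⟨inferInstance, ?_⟩
      exact Nat.cast_ne_zero.mpr (by positivity)
    · set p := ringChar F with hpdef
      haveI : Fact p.Prime := ⟨hp⟩
      haveI : CharP F p := ringChar.charP F
      set φ := ZMod.castHom (dvd_refl p) F with hφ
      have hfin : ((⊥ : Subfield F) : Set F).Finite := by
        refine Set.Finite.subset (Set.finite_range φ) ?_
        intro x hx
        exact RingHom.mem_fieldRange.mp ((bot_le : ⊥ ≤ φ.fieldRange) hx)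
      haveI : Finite (⊥ : Subfield F) := hfin.to_subtype
      refine ⟨inferInstance, ?_⟩
      intro hzero
      have hpdvd : p ∣ 4 * n := (CharP.cast_eq_zero_iff F p (4 * n)).mp hzero
      rcases (Nat.Prime.dvd_mul hp).mp hpdvd with h4 | hn'
      · have h2 : p ∣ 2 := hp.dvd_of_dvd_pow (n := 2) (by simpa using h4 : p ∣ 2 ^ 2)
        have : p = 2 := (Nat.prime_dvd_prime_iff_eq hp Nat.prime_two).mp h2
        rw [this] at hodd
        simp [Nat.odd_iff] at hodd
      · exact hdvd hn'
  obtain ⟨hperf, hcard⟩ := hmain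
  haveI := hperf
  have hlin : ∀ (r : F) (x : MonoidAlgebra F (QuaternionGroup n)), d (r • x) = r • d x := by
    intro r x
    rw [Algebra.smul_def, hd, myDerivField d hd r, zero_mul, zero_add, ← Algebra.smul_def]
  exact myInner hcard d hd hlin
end

section
/- Let n ≥ 2 and let F be a field that is an algebraic extension of its prime field, of odd prime characteristic p with p ∣ n. Then the dicyclic group algebra F T_{4n} has a non-zero outer derivation: there exists an additive map d : F T_{4n} → F T_{4n} satisfying d(xy) = d(x)y + x d(y) for all x, y, such that for every β ∈ F T_{4n} there is some α with d(α) ≠ αβ − βα. -/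
open MonoidAlgebra

namespace QuatDerAux

variable {F : Type*} [Field F] {n : ℕ}

open QuaternionGroup

/-- The weight function `ν : T_{4n} → F`, `ν(aⁱ) = φ i`, `ν(x·aⁱ) = -φ i`. -/
def nu (φ : ZMod (2*n) →+* F) : QuaternionGroup n → F
  | .a i => φ i
  | .xa i => - φ i

/-- The value of the derivation on a group element:
`D g = ν g • (a • g - a⁻¹ • g)`. -/
noncomputable def Dfun (φ : ZMod (2*n) →+* F) (g : QuaternionGroup n) :
    MonoidAlgebra F (QuaternionGroup n) :=
  nu φ g • (single (QuaternionGroup.a 1 * g) (1:F) - single (QuaternionGroup.a (-1) * g) (1:F))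

lemma keyD (φ : ZMod (2*n) →+* F) (hn0 : φ ((n : ZMod (2*n))) = 0)
    (g h : QuaternionGroup n) :
    Dfun φ (g * h) = Dfun φ g * single h (1:F) + single g (1:F) * Dfun φ h := by
  rcases g with i | i <;> rcases h with j | j <;>
    simp only [Dfun, nu, a_mul_a, a_mul_xa, xa_mul_a, xa_mul_xa, smul_sub,
      sub_mul, mul_sub, smul_mul_assoc, mul_smul_comm, single_mul_single, mul_one, one_mul,
      map_add, map_sub, hn0, neg_smul, neg_sub, mul_neg, neg_mul, neg_neg] <;>
    ring_nf <;> module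

/-- The derivation as an additive map on the group algebra. -/
noncomputable def der (φ : ZMod (2*n) →+* F) :
    MonoidAlgebra F (QuaternionGroup n) →+ MonoidAlgebra F (QuaternionGroup n) :=
  (Finsupp.liftAddHom fun g => (smulAddHom F (MonoidAlgebra F (QuaternionGroup n))).flip (Dfun φ g)).comp
    (MonoidAlgebra.coeffAddEquiv (R := F) (M := QuaternionGroup n)).toAddMonoidHom

lemma der_single (φ : ZMod (2*n) →+* F) (g : QuaternionGroup n) (c : F) :
    der φ (single g c) = c • Dfun φ g :=
  by show Finsupp.liftAddHom _ (Finsupp.single g c) = _; exact Finsupp.liftAddHom_apply_single _ _ _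

lemma der_leibniz (φ : ZMod (2*n) →+* F) (hn0 : φ ((n : ZMod (2*n))) = 0)
    (x y : MonoidAlgebra F (QuaternionGroup n)) :
    der φ (x * y) = der φ x * y + x * der φ y := by
  induction x using MonoidAlgebra.induction_linear with
  | zero => simp
  | add f f' hf hf' => simp only [add_mul, map_add, hf, hf']; abel
  | single g c =>
    induction y using MonoidAlgebra.induction_linear with
    | zero => simp
    | add f f' hf hf' => simp only [mul_add, map_add, hf, hf']; abel
    | single h e =>
      rw [single_mul_single, der_single, der_single, der_single, keyD φ hn0, smul_add]
      rw [show (single h e : MonoidAlgebra F (QuaternionGroup n)) = e • single h 1 by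
            rw [MonoidAlgebra.smul_single', mul_one],
          show (single g c : MonoidAlgebra F (QuaternionGroup n)) = c • single g 1 by
            rw [MonoidAlgebra.smul_single', mul_one]]
      simp only [smul_mul_assoc, mul_smul_comm, smul_smul]
      module

lemma central (β : MonoidAlgebra F (QuaternionGroup n)) :
    (single (QuaternionGroup.a 1) (1:F) + single (QuaternionGroup.a (-1)) 1) * β
      = β * (single (QuaternionGroup.a 1) (1:F) + single (QuaternionGroup.a (-1)) 1) := by
  induction β using MonoidAlgebra.induction_linear with
  | zero => simp
  | add f f' hf hf' => simp only [mul_add, add_mul, hf, hf']; abel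
  | single g c =>
    rcases g with j | j <;>
      simp only [add_mul, mul_add, single_mul_single, a_mul_a, a_mul_xa, xa_mul_a, one_mul,
        mul_one] <;> ring_nf <;> first | rfl | exact add_comm _ _

end QuatDerAux

/-- If `F` is an algebraic extension of its prime field (the bottom subfield of `F`)
of odd prime characteristic `p` with `p ∣ n`, then the dicyclic group algebra
`F T_{4n}` has a non-zero outer derivation. -/
theorem exists_outer_derivation_quaternion (F : Type*) [Field F]
    [Algebra.IsAlgebraic (⊥ : Subfield F) F] (n : ℕ) (hn : 2 ≤ n)
    (hchar : Nat.Prime (ringChar F) ∧ Odd (ringChar F) ∧ ringChar F ∣ n) :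
    ∃ d : MonoidAlgebra F (QuaternionGroup n) →+ MonoidAlgebra F (QuaternionGroup n),
      (∀ x y : MonoidAlgebra F (QuaternionGroup n), d (x * y) = d x * y + x * d y) ∧
      ∀ β : MonoidAlgebra F (QuaternionGroup n),
        ∃ α : MonoidAlgebra F (QuaternionGroup n), d α ≠ α * β - β * α := by
  obtain ⟨hp, hodd, hdvd⟩ := hchar
  haveI : CharP F (ringChar F) := ringChar.charP F
  have hp2 : ringChar F ≠ 2 := by
    have := Nat.odd_iff.mp hodd; omega
  have hdvd2 : ringChar F ∣ 2 * n := hdvd.mul_left 2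
  have hn3 : 3 ≤ n := by
    have h3p : 3 ≤ ringChar F := by
      have := hp.two_le; omega
    exact le_trans h3p (Nat.le_of_dvd (by omega) hdvd)
  let φ : ZMod (2*n) →+* F := ZMod.castHom hdvd2 F
  have hn0 : φ ((n : ZMod (2*n))) = 0 := by
    rw [map_natCast]
    exact (CharP.cast_eq_zero_iff F (ringChar F) n).2 hdvd
  have htwo : (2 : F) ≠ 0 := by
    have h2 : ((2:ℕ) : F) ≠ 0 := by
      rw [Ne, CharP.cast_eq_zero_iff F (ringChar F) 2]
      intro hd
      exact hp2 ((Nat.prime_dvd_prime_iff_eq hp Nat.prime_two).1 hd)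
    exact_mod_cast h2
  refine ⟨QuatDerAux.der φ, fun x y => QuatDerAux.der_leibniz φ hn0 x y, fun β => ?_⟩
  refine ⟨single (QuaternionGroup.a 1) (1:F) + single (QuaternionGroup.a (-1)) 1, ?_⟩
  rw [QuatDerAux.central β, sub_self]
  intro hcontra
  have hz2 : ((2 : ZMod (2*n))) ≠ 0 := by
    intro h
    have : ((2:ℕ) : ZMod (2*n)) = 0 := by exact_mod_cast h
    rw [ZMod.natCast_eq_zero_iff] at this
    have := Nat.le_of_dvd (by norm_num) this
    omega
  have hzm2 : ((-2 : ZMod (2*n))) ≠ 0 := fun h => hz2 (neg_eq_zero.mp h)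
  have hval : QuatDerAux.der φ
      (single (QuaternionGroup.a 1) (1:F) + single (QuaternionGroup.a (-1)) 1) =
      (single (QuaternionGroup.a (2 : ZMod (2*n))) (1:F) - single (QuaternionGroup.a 0) 1)
        - (single (QuaternionGroup.a 0) (1:F)
            - single (QuaternionGroup.a (-2 : ZMod (2*n))) 1) := by
    rw [map_add, QuatDerAux.der_single, QuatDerAux.der_single, one_smul, one_smul]
    simp only [QuatDerAux.Dfun, QuatDerAux.nu, QuaternionGroup.a_mul_a, map_one, map_neg,
      neg_smul, one_smul, neg_sub]
    ring_nf
    abel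
  rw [hcontra] at hval
  have hne1 : (QuaternionGroup.a (2 : ZMod (2*n)) : QuaternionGroup n)
      ≠ QuaternionGroup.a 0 := by
    simpa [-QuaternionGroup.a_zero] using hz2
  have hne2 : (QuaternionGroup.a (-2 : ZMod (2*n)) : QuaternionGroup n)
      ≠ QuaternionGroup.a 0 := by
    simpa [-QuaternionGroup.a_zero] using hzm2
  have hval' : (0 : QuaternionGroup n →₀ F) =
      Finsupp.single (QuaternionGroup.a (2 : ZMod (2*n))) 1
        - Finsupp.single (QuaternionGroup.a 0) 1
        - (Finsupp.single (QuaternionGroup.a 0) 1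
            - Finsupp.single (QuaternionGroup.a (-2 : ZMod (2*n))) 1) := congrArg MonoidAlgebra.coeff hval
  have h0 := DFunLike.congr_fun hval' (QuaternionGroup.a (0 : ZMod (2*n)))
  simp [Finsupp.single_apply, hne1, hne2, -QuaternionGroup.a_zero] at h0
  exact htwo (by linear_combination h0)
end

section
/- Let n be a positive integer, let G be a finite group of order 8n, and let a, b ∈ G with orderOf(a) = 4n, b² = 1, bab = a^{2n−1}, and G generated by {a, b} (so G ≅ SD_{8n}, the semidihedral group of order 8n). Let F be a field that is an algebraic extension of its prime field, of characteristic 0 or of odd prime characteristic p with p ∤ n. Then every derivation of the group algebra FG is inner: for every additive map d : FG → FG satisfying d(xy) = d(x)y + x d(y) for all x, y, there exists β ∈ FG such that d(α) = αβ − βα for all α ∈ FG. -/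
open MonoidAlgebra

/-- If `G` is the semidihedral group `SD_{8n}` and `F` is an algebraic extension
of its prime field (the bottom subfield of `F`) of characteristic `0` or of odd
prime characteristic `p` with `p ∤ n`, then every derivation of the group algebra
`FG` is inner. -/
theorem derivations_semidihedral_inner (F : Type*) [Field F]
    [Algebra.IsAlgebraic (⊥ : Subfield F) F] (n : ℕ) (hn : 0 < n)
    (G : Type*) [Group G] [Fintype G] (hG : Fintype.card G = 8 * n)
    (a b : G) (ha : orderOf a = 4 * n) (hb : b ^ 2 = 1)
    (hba : b * a * b = a ^ (2 * n - 1))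
    (hgen : Subgroup.closure ({a, b} : Set G) = ⊤)
    (hchar : ringChar F = 0 ∨
      (Nat.Prime (ringChar F) ∧ Odd (ringChar F) ∧ ¬ ringChar F ∣ n))
    (d : MonoidAlgebra F G →+ MonoidAlgebra F G)
    (hd : ∀ x y : MonoidAlgebra F G, d (x * y) = d x * y + x * d y) :
    ∃ β : MonoidAlgebra F G, ∀ α : MonoidAlgebra F G, d α = α * β - β * α := by
  classical
  -- the cardinality of `G` is invertible in `F`
  have hcard : ((Fintype.card G : F)) ≠ 0 := by
    rw [hG]
    rcases hchar with h0 | ⟨hp, hodd, hdvd⟩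
    · haveI : CharP F 0 := h0 ▸ ringChar.charP F
      haveI : CharZero F := CharP.charP_to_charZero F
      exact Nat.cast_ne_zero.mpr (by positivity)
    · haveI : CharP F (ringChar F) := ringChar.charP F
      rw [Ne, CharP.cast_eq_zero_iff F (ringChar F)]
      intro hdvd8n
      rcases (Nat.Prime.dvd_mul hp).mp hdvd8n with h8 | hn'
      · have h2 : ringChar F ∣ 2 :=
          hp.dvd_of_dvd_pow (show ringChar F ∣ 2 ^ 3 by norm_num; exact h8)
        have h2' : ringChar F = 2 := (Nat.prime_dvd_prime_iff_eq hp Nat.prime_two).mp h2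
        rw [h2', Nat.odd_iff] at hodd
        omega
      · exact hdvd hn'
  -- `F` is a separable extension of its prime field
  haveI hsepalg : Algebra.IsSeparable (⊥ : Subfield F) F := by
    rcases hchar with h0 | ⟨hp, hodd, hdvd⟩
    · haveI : CharP F 0 := h0 ▸ ringChar.charP F
      haveI : CharZero F := CharP.charP_to_charZero F
      haveI : CharZero (⊥ : Subfield F) :=
        (RingHom.charZero_iff (ϕ := (⊥ : Subfield F).subtype) Subtype.val_injective).mpr
          inferInstance
      infer_instance
    · haveI : CharP F (ringChar F) := ringChar.charP F
      haveI : ExpChar F (ringChar F) := .prime hp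
      haveI : CharP (⊥ : Subfield F) (ringChar F) :=
        ((⊥ : Subfield F).subtype).charP Subtype.val_injective (ringChar F)
      haveI : ExpChar (⊥ : Subfield F) (ringChar F) := .prime hp
      have hfix : ∀ x : F, x ∈ (⊥ : Subfield F) → x ^ ringChar F = x := by
        intro x hx
        rw [← Subfield.closure_empty] at hx
        induction hx using Subfield.closure_induction with
        | mem x hx => exact absurd hx (Set.notMem_empty x)
        | one => exact one_pow _
        | add x y hx hy ihx ihy => rw [add_pow_expChar, ihx, ihy]
        | neg x hx ih => rw [hodd.neg_pow, ih]
        | inv x hx ih => rw [inv_pow, ih]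
        | mul x y hx hy ihx ihy => rw [mul_pow, ihx, ihy]
      haveI : PerfectRing (⊥ : Subfield F) (ringChar F) := by
        refine PerfectRing.ofSurjective _ _ (fun x => ⟨x, ?_⟩)
        ext
        push_cast [frobenius_def]
        exact hfix x x.2
      haveI : PerfectField (⊥ : Subfield F) := PerfectRing.toPerfectField _ (ringChar F)
      infer_instance
  set A := MonoidAlgebra F G with hA
  -- basic facts about `d`
  have hd1 : d 1 = 0 := by
    have h := hd 1 1
    rw [mul_one, mul_one, one_mul] at h
    exact left_eq_add.mp h
  -- `d` vanishes on scalars from the prime field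
  have hbot : ∀ c ∈ (⊥ : Subfield F), d (algebraMap F A c) = 0 := by
    intro c hc
    rw [← Subfield.closure_empty] at hc
    induction hc using Subfield.closure_induction with
    | mem x hx => exact absurd hx (Set.notMem_empty x)
    | one => rw [map_one]; exact hd1
    | add x y hx hy ihx ihy => rw [map_add, map_add, ihx, ihy, add_zero]
    | neg x hx ih => rw [map_neg, map_neg, ih, neg_zero]
    | mul x y hx hy ihx ihy => rw [map_mul, hd, ihx, ihy, zero_mul, mul_zero, add_zero]
    | inv x hx ih =>
      rcases eq_or_ne x 0 with rfl | hx0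
      · rw [inv_zero, map_zero, map_zero]
      · have h1 : d (algebraMap F A x * algebraMap F A x⁻¹) = 0 := by
          rw [← map_mul, mul_inv_cancel₀ hx0, map_one]; exact hd1
        rw [hd, ih, zero_mul, zero_add] at h1
        have h2 : algebraMap F A x⁻¹ * (algebraMap F A x * d (algebraMap F A x⁻¹)) = 0 := by
          rw [h1, mul_zero]
        rwa [← mul_assoc, ← map_mul, inv_mul_cancel₀ hx0, map_one, one_mul] at h2
  -- `d` vanishes on all scalars
  have hscal : ∀ c : F, d (algebraMap F A c) = 0 := by
    intro c
    set K := (⊥ : Subfield F)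
    set δ : F → A := fun x => d (algebraMap F A x) with hδ
    have hδadd : ∀ x y : F, δ (x + y) = δ x + δ y := by
      intro x y; simp only [hδ, map_add]
    have hδmul : ∀ x y : F, δ (x * y) = x • δ y + y • δ x := by
      intro x y
      show d (algebraMap F A (x * y)) = x • d (algebraMap F A y) + y • d (algebraMap F A x)
      rw [map_mul, hd, ← Algebra.commutes y (d (algebraMap F A x)), ← Algebra.smul_def,
        ← Algebra.smul_def, add_comm]
    have hδbot : ∀ k : K, δ (algebraMap K F k) = 0 := fun k => hbot _ k.2
    have hδ1 : δ 1 = 0 := by simpa [hδ] using hd1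
    have hpow : ∀ k : ℕ, δ (c ^ k) = ((k : F) * c ^ (k - 1)) • δ c := by
      intro k
      induction k with
      | zero => simpa using hδ1
      | succ k ih =>
        rw [pow_succ', hδmul, ih, smul_smul]
        cases k with
        | zero => simp
        | succ m =>
          rw [← add_smul]
          congr 1
          push_cast
          ring
    have hP : ∀ P : Polynomial K,
        δ (Polynomial.aeval c P) = (Polynomial.aeval c (Polynomial.derivative P)) • δ c := by
      intro P
      induction P using Polynomial.induction_on' with
      | add p q ihp ihq =>
        rw [map_add, hδadd, ihp, ihq, map_add, map_add, add_smul]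
      | monomial i k =>
        rw [Polynomial.aeval_monomial, Polynomial.derivative_monomial, Polynomial.aeval_monomial,
          hδmul, hpow, hδbot, smul_zero, add_zero, smul_smul, map_mul, map_natCast]
        ring_nf
    have hint : IsIntegral K c := (Algebra.IsAlgebraic.isAlgebraic (R := K) c).isIntegral
    have haev : Polynomial.aeval c (minpoly K c) = 0 := minpoly.aeval _ _
    have hder : Polynomial.aeval c (Polynomial.derivative (minpoly K c)) ≠ 0 :=
      (Algebra.IsSeparable.isSeparable K c).aeval_derivative_ne_zero haev
    have h0 : (0 : A) = (Polynomial.aeval c (Polynomial.derivative (minpoly K c))) • δ c := by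
      rw [← hP, haev]
      simpa [hδ] using (d.map_zero)
    exact ((smul_eq_zero.mp h0.symm).resolve_left hder)
  -- `d` is `F`-linear
  have hlin : ∀ (r : F) (x : A), d (r • x) = r • d x := by
    intro r x
    rw [Algebra.smul_def, hd, hscal, zero_mul, zero_add, ← Algebra.smul_def]
  -- the group-cocycle averaging argument
  set o : G →* A := MonoidAlgebra.of F G with ho
  have hunit : ∀ g : G, o g * o g⁻¹ = 1 := by
    intro g; rw [← map_mul, mul_inv_cancel, map_one]
  have hunit' : ∀ g : G, o g⁻¹ * o g = 1 := by
    intro g; rw [← map_mul, inv_mul_cancel, map_one]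
  set β₀ : A := ∑ h : G, d (o h) * o h⁻¹ with hβ₀
  have key : ∀ g : G, (Fintype.card G : F) • d (o g) = β₀ * o g - o g * β₀ := by
    intro g
    have hcl : ∀ (u : G) (x : A), o u * (o u⁻¹ * x) = x := by
      intro u x; rw [← mul_assoc, hunit, one_mul]
    have hre : ∑ h : G, d (o (g * h)) * o (g * h)⁻¹ = β₀ :=
      Fintype.sum_equiv (Equiv.mulLeft g) _ _ (fun h => rfl)
    have hterm : ∀ h : G, d (o (g * h)) * o (g * h)⁻¹
        = d (o g) * o g⁻¹ + o g * (d (o h) * o h⁻¹) * o g⁻¹ := by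
      intro h
      rw [map_mul, hd, mul_inv_rev, map_mul, add_mul]
      congr 1
      · rw [mul_assoc (d (o g)), hcl]
      · simp only [mul_assoc]
    have hsum : β₀ = (Fintype.card G : F) • (d (o g) * o g⁻¹) + o g * β₀ * o g⁻¹ := by
      calc β₀ = ∑ h : G, d (o (g * h)) * o (g * h)⁻¹ := hre.symm
        _ = ∑ _h : G, (d (o g) * o g⁻¹) + ∑ h : G, o g * (d (o h) * o h⁻¹) * o g⁻¹ := by
            rw [← Finset.sum_add_distrib]
            exact Finset.sum_congr rfl (fun h _ => hterm h)
        _ = (Fintype.card G : F) • (d (o g) * o g⁻¹) + o g * β₀ * o g⁻¹ := by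
            rw [Finset.sum_const, Finset.card_univ, Nat.cast_smul_eq_nsmul]
            congr 1
            rw [← Finset.sum_mul, ← Finset.mul_sum]
    have h2 := congrArg (fun x => x * o g) hsum
    rw [add_mul, smul_mul_assoc, mul_assoc (d (o g)), hunit' g, mul_one,
      mul_assoc (o g * β₀), hunit' g, mul_one] at h2
    rw [h2]
    exact (add_sub_cancel_right _ _).symm
  set u : F := (Fintype.card G : F)⁻¹ with hu
  refine ⟨-(u • β₀), fun α => ?_⟩
  have hβg : ∀ g : G, d (o g) = o g * -(u • β₀) - -(u • β₀) * o g := by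
    intro g
    rw [mul_neg, neg_mul, sub_neg_eq_add, neg_add_eq_sub, smul_mul_assoc, mul_smul_comm,
      ← smul_sub, ← key, smul_smul, hu, inv_mul_cancel₀ hcard, one_smul]
  induction α using MonoidAlgebra.induction_on with
  | of g => exact hβg g
  | add f g hf hg => rw [map_add, hf, hg, add_mul, mul_add]; abel
  | smul r x hx => rw [hlin, hx, smul_mul_assoc, mul_smul_comm, ← smul_sub]
end
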